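/- arXiv:2412.10335 — 12 statements merged into one kernel-verified Lean document; each statement's English description precedes it below -/
import Mathlib

section
/- Let G be a finite simple graph and e = {x,y} an edge of G. If e is a regular edge (i.e., no minimal vertex cover of G contains both x and y), then e is not contained in any triangle of G. -/
/-- `X` is a vertex cover of `G`: every edge has an endpoint in `X`. -/
def SimpleGraph.IsVertexCover' {V : Type*} (G : SimpleGraph V) (X : Set V) : Prop :=
  ∀ ⦃u v : V⦄, G.Adj u v → u ∈ X ∨ v ∈ X

/-- `X` is a minimal vertex cover of `G`. -/
def SimpleGraph.IsMinVertexCover {V : Type*} (G : SimpleGraph V) (X : Set V) : Prop :=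
  G.IsVertexCover' X ∧ ∀ Y ⊆ X, G.IsVertexCover' Y → Y = X

/-- An edge `{x,y}` is regular: no minimal vertex cover contains both endpoints. -/
def SimpleGraph.IsRegularEdge {V : Type*} (G : SimpleGraph V) (x y : V) : Prop :=
  ∀ X : Set V, G.IsMinVertexCover X → ¬(x ∈ X ∧ y ∈ X)

/-- a regular edge is not contained in any triangle. -/
theorem regular_edge_not_in_triangle {V : Type*} [Fintype V]
    (G : SimpleGraph V) (x y : V) (hxy : G.Adj x y)
    (hreg : G.IsRegularEdge x y) :
    ∀ b : V, ¬(G.Adj x b ∧ G.Adj y b) := by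
  rintro b ⟨hxb, hyb⟩
  -- independent sets
  set P : Set (Set V) := {S | ∀ u ∈ S, ∀ v ∈ S, ¬ G.Adj u v} with hP
  have hb : ({b} : Set V) ∈ P := by
    rintro u hu v hv
    simp only [Set.mem_singleton_iff] at hu hv
    subst hu; subst hv; exact fun h => G.loopless.irrefl _ h
  obtain ⟨S, hsub, hSmax⟩ := zorn_subset_nonempty P (fun c hc hchain hne => by
    refine ⟨⋃₀ c, ?_, fun s hs => Set.subset_sUnion_of_mem hs⟩
    rintro u hu v hv hadj
    obtain ⟨s, hs, hus⟩ := hu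
    obtain ⟨t, ht, hvt⟩ := hv
    rcases hchain.total hs ht with h | h
    · exact hc ht u (h hus) v hvt hadj
    · exact hc hs u hus v (h hvt) hadj) {b} hb
  have hSindep : S ∈ P := hSmax.1
  have hbS : b ∈ S := hsub rfl
  have hxS : x ∉ S := fun hx => hSindep x hx b hbS hxb
  have hyS : y ∉ S := fun hy => hSindep y hy b hbS hyb
  have hcover : G.IsVertexCover' Sᶜ := by
    intro u v hadj
    by_contra h
    push_neg at h
    simp only [Set.mem_compl_iff, not_not] at h
    exact hSindep u h.1 v h.2 hadj
  refine hreg Sᶜ ⟨hcover, ?_⟩ ⟨hxS, hyS⟩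
  intro Y hY hYc
  by_contra hne
  obtain ⟨v, hvS, hvY⟩ : ∃ v, v ∈ Sᶜ ∧ v ∉ Y := by
    by_contra h
    push_neg at h
    exact hne (Set.Subset.antisymm hY h)
  have hvnS : v ∉ S := hvS
  -- S ∪ {v} is not independent
  have : ¬ (insert v S ∈ P) := fun hins => by
    exact hvnS (hSmax.2 hins (Set.subset_insert v S) (Set.mem_insert v S))
  -- so v is adjacent to some s ∈ S
  obtain ⟨s, hsS, hadj⟩ : ∃ s ∈ S, G.Adj v s := by
    by_contra h
    push_neg at h
    apply this
    rintro u hu w hw hadj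
    rcases Set.mem_insert_iff.1 hu with hu | hu
    · rcases Set.mem_insert_iff.1 hw with hw | hw
      · exact G.loopless.irrefl _ (hu ▸ hw ▸ hadj)
      · exact h w hw (hu ▸ hadj)
    · rcases Set.mem_insert_iff.1 hw with hw | hw
      · exact h u hu (hw ▸ hadj.symm)
      · exact hSindep u hu w hw hadj
  have hsY : s ∉ Y := fun hsY => (hY hsY) hsS
  rcases hYc hadj with h | h
  · exact hvY h
  · exact hsY h
end

section
/- Let G be a finite simple graph and {x,y} a regular edge of G. Then for any vertices a ∈ N(x) \ {y} and b ∈ N(y) \ {x}, we have a ≠ b, {a,y} ∉ E(G), {x,b} ∉ E(G), and {a,b} ∈ E(G); that is, the induced subgraph on {a,x,y,b} is a 4-cycle. -/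
/-- Key lemma: if `I` is an independent set containing a neighbor of `x` and a
neighbor of `y`, then some minimal vertex cover contains both `x` and `y`,
contradicting regularity. -/
lemma regular_edge_key {V : Type*} [Fintype V] (G : SimpleGraph V) (x y : V)
    (hreg : G.IsRegularEdge x y) (I : Set V)
    (hI : ∀ u ∈ I, ∀ v ∈ I, ¬ G.Adj u v)
    (a b : V) (ha : a ∈ I) (hb : b ∈ I) (hxa : G.Adj x a) (hyb : G.Adj y b) : False := by
  have hcov : G.IsVertexCover' Iᶜ := by
    intro u v huv
    by_contra h
    push_neg at h
    simp only [Set.notMem_compl_iff] at h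
    exact hI u h.1 v h.2 huv
  obtain ⟨Y, ⟨hYsub, hYcov⟩, hmin⟩ :=
    (wellFounded_lt (α := Set V)).has_min
      {Y : Set V | Y ⊆ Iᶜ ∧ G.IsVertexCover' Y} ⟨Iᶜ, le_refl _, hcov⟩
  have hYmin : G.IsMinVertexCover Y := by
    refine ⟨hYcov, fun Z hZY hZcov => ?_⟩
    by_contra hne
    exact hmin Z ⟨hZY.trans hYsub, hZcov⟩ (lt_of_le_of_ne hZY hne)
  have hxY : x ∈ Y := (hYcov hxa).resolve_right (fun h => hYsub h ha)
  have hyY : y ∈ Y := (hYcov hyb).resolve_right (fun h => hYsub h hb)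
  exact hreg Y hYmin ⟨hxY, hyY⟩

/-- neighbors of the endpoints of a regular edge form induced 4-cycles. -/
theorem regular_edge_four_cycle {V : Type*} [Fintype V]
    (G : SimpleGraph V) (x y : V) (hxy : G.Adj x y)
    (hreg : G.IsRegularEdge x y) :
    ∀ a b : V, G.Adj x a → a ≠ y → G.Adj y b → b ≠ x →
      a ≠ b ∧ ¬ G.Adj a y ∧ ¬ G.Adj x b ∧ G.Adj a b := by
  intro a b hxa _ hyb _
  have hsingle : ∀ c : V, (∀ u ∈ ({c} : Set V), ∀ v ∈ ({c} : Set V), ¬ G.Adj u v) := by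
    intro c u hu v hv
    simp only [Set.mem_singleton_iff] at hu hv
    subst hu; subst hv
    exact G.loopless.irrefl _
  have hay : ¬ G.Adj a y := fun h =>
    regular_edge_key G x y hreg {a} (hsingle a) a a rfl rfl hxa h.symm
  have hxb : ¬ G.Adj x b := fun h =>
    regular_edge_key G x y hreg {b} (hsingle b) b b rfl rfl h hyb
  have hab_ne : a ≠ b := by
    rintro rfl
    exact hay hyb.symm
  refine ⟨hab_ne, hay, hxb, ?_⟩
  by_contra hab
  refine regular_edge_key G x y hreg {a, b} ?_ a b (by simp) (by simp) hxa hyb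
  intro u hu v hv huv
  simp only [Set.mem_insert_iff, Set.mem_singleton_iff] at hu hv
  rcases hu with rfl | rfl <;> rcases hv with rfl | rfl
  · exact G.loopless.irrefl _ huv
  · exact hab huv
  · exact hab huv.symm
  · exact G.loopless.irrefl _ huv
end

section
/- Let G be a finite simple graph and e = {x,y} an edge of G. Then e is a regular edge (no minimal vertex cover contains both x and y) if and only if e satisfies Property P. -/
/-- Property P for an edge `{x,y}` of a simple graph. -/
def SimpleGraph.HasPropertyP {V : Type*} (G : SimpleGraph V) (x y : V) : Prop :=
  ∀ a b : V, G.Adj a x → a ≠ y → G.Adj y b → b ≠ x → a ≠ b ∧ G.Adj a b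

/-- Any independent set extends to a maximal independent set, whose complement
is a minimal vertex cover. -/
lemma exists_maxIndep {V : Type*} (G : SimpleGraph V) (S : Set V)
    (hS : ∀ u ∈ S, ∀ v ∈ S, ¬G.Adj u v) :
    ∃ I : Set V, S ⊆ I ∧ Maximal (· ∈ {I : Set V | ∀ u ∈ I, ∀ v ∈ I, ¬G.Adj u v}) I := by
  apply zorn_subset_nonempty {I : Set V | ∀ u ∈ I, ∀ v ∈ I, ¬G.Adj u v} _ S hS
  intro c hc hchain hne
  refine ⟨⋃₀ c, ?_, fun s hs => Set.subset_sUnion_of_mem hs⟩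
  rintro u ⟨su, hsu, hu⟩ v ⟨sv, hsv, hv⟩
  rcases hchain.total hsu hsv with h | h
  · exact hc hsv u (h hu) v hv
  · exact hc hsu u hu v (h hv)

/-- an edge is regular if and only if it has Property P. -/
theorem regular_edge_iff_propertyP {V : Type*} [Fintype V]
    (G : SimpleGraph V) (x y : V) (hxy : G.Adj x y) :
    G.IsRegularEdge x y ↔ G.HasPropertyP x y := by
  constructor
  · -- regular → P, by contraposition
    intro hreg
    by_contra hP
    unfold SimpleGraph.HasPropertyP at hP
    push_neg at hP
    obtain ⟨a, b, hax, hay, hyb, hbx, hP⟩ := hP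
    -- {a,b} is independent
    have hSind : ∀ u ∈ ({a, b} : Set V), ∀ v ∈ ({a, b} : Set V), ¬G.Adj u v := by
      rintro u (rfl | rfl) v (rfl | rfl)
      · exact G.loopless.irrefl _
      · intro h; exact hP (G.ne_of_adj h) h
      · intro h; exact hP (G.ne_of_adj h).symm h.symm
      · exact G.loopless.irrefl _
    obtain ⟨I, hSI, hImem, hImax⟩ := exists_maxIndep G _ hSind
    have haI : a ∈ I := hSI (by left; rfl)
    have hbI : b ∈ I := hSI (by right; rfl)
    -- Iᶜ is a minimal vertex cover containing x and y
    have hcov : G.IsVertexCover' Iᶜ := by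
      intro u v huv
      by_contra h
      push_neg at h
      simp only [Set.notMem_compl_iff] at h
      exact hImem u h.1 v h.2 huv
    have hmin : G.IsMinVertexCover Iᶜ := by
      refine ⟨hcov, fun Y hY hYcov => ?_⟩
      refine Set.Subset.antisymm hY (fun v hv => ?_)
      by_contra hvY
      have hvI : v ∉ I := hv
      -- I ∪ {v} is not independent
      have : ¬ (∀ u ∈ insert v I, ∀ w ∈ insert v I, ¬G.Adj u w) := by
        intro hind
        have := hImax hind (Set.subset_insert v I)
        exact hvI (this (Set.mem_insert v I))
      push_neg at this
      obtain ⟨u, hu, w, hw, huw⟩ := this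
      rcases hu with rfl | huI
      · rcases hw with rfl | hwI
        · exact G.loopless.irrefl _ huw
        · rcases hYcov huw with h | h
          · exact hvY h
          · exact (hY h) hwI
      · rcases hw with rfl | hwI
        · rcases hYcov huw with h | h
          · exact (hY h) huI
          · exact hvY h
        · exact hImem u huI w hwI huw
    apply hreg Iᶜ hmin
    constructor
    · intro hxI
      exact hImem x hxI a haI hax.symm
    · intro hyI
      exact hImem y hyI b hbI hyb
  · -- P → regular
    intro hP X hX ⟨hxX, hyX⟩
    obtain ⟨hcov, hmin⟩ := hX
    -- X \ {x} is not a cover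
    have hx' : ¬ G.IsVertexCover' (X \ {x}) := by
      intro h
      have heq := hmin _ Set.diff_subset h
      have h2 := hxX
      rw [← heq] at h2
      exact h2.2 rfl
    have hy' : ¬ G.IsVertexCover' (X \ {y}) := by
      intro h
      have heq := hmin _ Set.diff_subset h
      have h2 := hyX
      rw [← heq] at h2
      exact h2.2 rfl
    unfold SimpleGraph.IsVertexCover' at hx' hy'
    push_neg at hx' hy'
    obtain ⟨u, v, huv, hu, hv⟩ := hx'
    obtain ⟨p, q, hpq, hp, hq⟩ := hy'
    -- one of u, v equals x, the other is outside X
    have hcase1 : ∃ a, G.Adj a x ∧ a ∉ X := by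
      rcases hcov huv with h | h
      · have : u = x := by
          by_contra h'
          exact hu ⟨h, h'⟩
        subst this
        refine ⟨v, huv.symm, fun hvX => hv ⟨hvX, ?_⟩⟩
        rintro rfl
        exact G.loopless.irrefl _ huv
      · have : v = x := by
          by_contra h'
          exact hv ⟨h, h'⟩
        subst this
        refine ⟨u, huv, fun huX => hu ⟨huX, ?_⟩⟩
        rintro rfl
        exact G.loopless.irrefl _ huv
    have hcase2 : ∃ b, G.Adj y b ∧ b ∉ X := by
      rcases hcov hpq with h | h
      · have : p = y := by
          by_contra h'
          exact hp ⟨h, h'⟩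
        subst this
        refine ⟨q, hpq, fun hqX => hq ⟨hqX, ?_⟩⟩
        rintro rfl
        exact G.loopless.irrefl _ hpq
      · have : q = y := by
          by_contra h'
          exact hq ⟨h, h'⟩
        subst this
        refine ⟨p, hpq.symm, fun hpX => hp ⟨hpX, ?_⟩⟩
        rintro rfl
        exact G.loopless.irrefl _ hpq
    obtain ⟨a, hax, haX⟩ := hcase1
    obtain ⟨b, hyb, hbX⟩ := hcase2
    have hay : a ≠ y := fun h => haX (h ▸ hyX)
    have hbx : b ≠ x := fun h => hbX (h ▸ hxX)
    obtain ⟨hab, hadj⟩ := hP a b hax hay hyb hbx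
    rcases hcov hadj with h | h
    · exact haX h
    · exact hbX h
end

section
/- Let G be a finite simple graph, {x,y} an edge of G with y a leaf (y has exactly one neighbor, namely x), and let {x,z} be another edge of G with z ≠ y. Then {x,z} is a regular edge of G if and only if z is a leaf. -/
/-- Every vertex cover of a finite graph contains a minimal vertex cover. -/
lemma exists_min_vertex_cover_subset {V : Type*} [Fintype V] (G : SimpleGraph V) :
    ∀ X : Set V, G.IsVertexCover' X → ∃ Y, Y ⊆ X ∧ G.IsMinVertexCover Y := by
  have key : ∀ n, ∀ X : Set V, X.ncard = n → G.IsVertexCover' X →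
      ∃ Y, Y ⊆ X ∧ G.IsMinVertexCover Y := by
    intro n
    induction n using Nat.strong_induction_on with
    | _ n ih =>
      intro X hn hX
      by_cases h : ∀ Y ⊆ X, G.IsVertexCover' Y → Y = X
      · exact ⟨X, subset_refl _, hX, h⟩
      · push_neg at h
        obtain ⟨Y, hYX, hYc, hne⟩ := h
        have hlt : Y.ncard < n := hn ▸ Set.ncard_lt_ncard (hYX.ssubset_of_ne hne) (Set.toFinite X)
        obtain ⟨Z, hZ, hmin⟩ := ih _ hlt Y rfl hYc
        exact ⟨Z, hZ.trans hYX, hmin⟩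
  intro X hX
  exact key X.ncard X rfl hX

/-- if `y` is a leaf attached to `x`, then an edge `{x,z}` (with `z ≠ y`)
is regular iff `z` is a leaf. -/
theorem regular_edge_iff_leaf {V : Type*} [Fintype V]
    (G : SimpleGraph V) (x y z : V) (hxy : G.Adj x y)
    (hyleaf : ∀ w : V, G.Adj y w → w = x)
    (hxz : G.Adj x z) (hzy : z ≠ y) :
    G.IsRegularEdge x z ↔ ∀ w : V, G.Adj z w → w = x := by
  constructor
  · intro hreg
    by_contra h
    push_neg at h
    obtain ⟨w, hzw, hwx⟩ := h
    -- {y, w} is independent, so its complement is a vertex cover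
    have hcov : G.IsVertexCover' ({y, w} : Set V)ᶜ := by
      intro u v huv
      by_contra hc
      push_neg at hc
      obtain ⟨hu, hv⟩ := hc
      simp only [Set.notMem_compl_iff, Set.mem_insert_iff, Set.mem_singleton_iff] at hu hv
      rcases hu with rfl | rfl <;> rcases hv with rfl | rfl
      · exact G.irrefl huv
      · exact hwx (hyleaf _ huv)
      · exact hwx (hyleaf _ huv.symm)
      · exact G.irrefl huv
    obtain ⟨Y, hYsub, hYmin⟩ := exists_min_vertex_cover_subset G _ hcov
    have hyY : y ∉ Y := fun hy => (hYsub hy) (Set.mem_insert _ _)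
    have hwY : w ∉ Y := fun hw => (hYsub hw) (Set.mem_insert_of_mem _ rfl)
    have hxY : x ∈ Y := (hYmin.1 hxy).resolve_right hyY
    have hzY : z ∈ Y := (hYmin.1 hzw).resolve_right hwY
    exact hreg Y hYmin ⟨hxY, hzY⟩
  · intro hzleaf X hXmin ⟨hxX, hzX⟩
    have hxz' : x ≠ z := hxz.ne
    have hcov : G.IsVertexCover' (X \ {z}) := by
      intro u v huv
      rcases hXmin.1 huv with hu | hv
      · by_cases h : u = z
        · subst h
          have : v = x := hzleaf _ huv
          subst this
          exact Or.inr ⟨hxX, hxz'⟩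
        · exact Or.inl ⟨hu, h⟩
      · by_cases h : v = z
        · subst h
          have : u = x := hzleaf _ huv.symm
          subst this
          exact Or.inl ⟨hxX, hxz'⟩
        · exact Or.inr ⟨hv, h⟩
    have := hXmin.2 (X \ {z}) Set.diff_subset hcov
    have hz' : z ∉ X \ {z} := fun h => h.2 rfl
    rw [this] at hz'
    exact hz' hzX
end

section
/- Let G be a finite simple graph and x, y distinct non-adjacent vertices. No minimal vertex cover of G contains both x and y if and only if no minimal vertex cover of the graph Ĝ obtained from G by adding the edge {x,y} contains both x and y. -/
lemma exists_min_subcover {V : Type*} [Fintype V] (G : SimpleGraph V) :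
    ∀ X : Set V, G.IsVertexCover' X → ∃ Y ⊆ X, G.IsMinVertexCover Y := by
  have key : ∀ n (X : Set V), X.ncard = n → G.IsVertexCover' X →
      ∃ Y ⊆ X, G.IsMinVertexCover Y := by
    intro n
    induction n using Nat.strong_induction_on with
    | _ n ih =>
      intro X hn hX
      by_cases h : ∀ Y ⊆ X, G.IsVertexCover' Y → Y = X
      · exact ⟨X, subset_rfl, hX, h⟩
      · push_neg at h
        obtain ⟨Y, hYX, hYc, hYne⟩ := h
        have hlt : Y.ncard < n :=
          hn ▸ Set.ncard_lt_ncard (hYX.ssubset_of_ne hYne) (Set.toFinite X)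
        obtain ⟨Z, hZY, hZ⟩ := ih _ hlt Y rfl hYc
        exact ⟨Z, hZY.trans hYX, hZ⟩
  exact fun X hX => key X.ncard X rfl hX

/-- for distinct non-adjacent `x, y`, no minimal vertex cover of `G`
contains both `x` and `y` iff the same holds for the graph `Ĝ = G + {x,y}`. -/
theorem min_cover_iff_added_edge {V : Type*} [Fintype V]
    (G : SimpleGraph V) (x y : V) (hne : x ≠ y) (hnadj : ¬ G.Adj x y) :
    (∀ X : Set V, G.IsMinVertexCover X → ¬(x ∈ X ∧ y ∈ X)) ↔
      (∀ X : Set V,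
        (SimpleGraph.fromEdgeSet (G.edgeSet ∪ {s(x, y)})).IsMinVertexCover X →
          ¬(x ∈ X ∧ y ∈ X)) := by
  set H := SimpleGraph.fromEdgeSet (G.edgeSet ∪ {s(x, y)}) with hH
  have hadjH : ∀ u v : V, H.Adj u v ↔ (G.Adj u v ∨ s(u, v) = s(x, y)) ∧ u ≠ v := by
    intro u v
    simp only [hH, SimpleGraph.fromEdgeSet_adj, Set.mem_union, SimpleGraph.mem_edgeSet,
      Set.mem_singleton_iff]
  -- a cover of G containing x or y covers H
  have covH : ∀ X : Set V, G.IsVertexCover' X → (x ∈ X ∨ y ∈ X) → H.IsVertexCover' X := by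
    intro X hX hxy u v huv
    rw [hadjH] at huv
    rcases huv.1 with h | h
    · exact hX h
    · rw [Sym2.eq_iff] at h
      rcases h with ⟨hu, hv⟩ | ⟨hu, hv⟩
      · subst hu; subst hv; exact hxy
      · subst hu; subst hv; exact hxy.symm
  -- a cover of H covers G
  have covG : ∀ X : Set V, H.IsVertexCover' X → G.IsVertexCover' X := by
    intro X hX u v huv
    exact hX ((hadjH u v).2 ⟨Or.inl huv, huv.ne⟩)
  constructor
  · intro h X hX ⟨hx, hy⟩
    obtain ⟨Y, hYX, hY⟩ := exists_min_subcover G X (covG X hX.1)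
    by_cases hxY : x ∈ Y <;> by_cases hyY : y ∈ Y
    · exact h Y hY ⟨hxY, hyY⟩
    · have : Y = X := hX.2 Y hYX (covH Y hY.1 (Or.inl hxY))
      exact hyY (this ▸ hy)
    · have : Y = X := hX.2 Y hYX (covH Y hY.1 (Or.inr hyY))
      exact hxY (this ▸ hx)
    · have hsub : Y ∪ {x} ⊆ X := Set.union_subset hYX (by simpa using hx)
      have hcov : G.IsVertexCover' (Y ∪ {x}) := fun u v huv =>
        (hY.1 huv).imp (fun h => Or.inl h) (fun h => Or.inl h)
      have : Y ∪ {x} = X := hX.2 _ hsub (covH _ hcov (Or.inl (by simp)))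
      have hyY' : y ∈ Y ∪ {x} := this ▸ hy
      rcases hyY' with h | h
      · exact hyY h
      · exact hne (Set.mem_singleton_iff.1 h).symm
  · intro h X hX ⟨hx, hy⟩
    have hXH : H.IsVertexCover' X := covH X hX.1 (Or.inl hx)
    obtain ⟨Y, hYX, hY⟩ := exists_min_subcover H X hXH
    have hYeq : Y = X := hX.2 Y hYX (covG Y hY.1)
    exact h Y hY ⟨hYeq ▸ hx, hYeq ▸ hy⟩
end

section
/- Let G be a finite simple graph and x, y distinct non-adjacent vertices, and let Ĝ be the graph obtained by adding the edge {x,y}. Then the edge {x,y} has Property P in Ĝ if and only if no minimal vertex cover of G contains both x and y. -/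
/-- From a minimal vertex cover and a member `x`, extract a neighbour of `x` outside the cover. -/
lemma aux_exists_adj_not_mem {V : Type*} (G : SimpleGraph V) {X : Set V}
    (hX : G.IsMinVertexCover X) {x : V} (hx : x ∈ X) : ∃ a, G.Adj x a ∧ a ∉ X := by
  obtain ⟨hcov, hmin⟩ := hX
  by_contra hna
  push_neg at hna
  have hc : G.IsVertexCover' (X \ {x}) := by
    intro u v huv
    rcases hcov huv with hu | hv
    · by_cases hux : u = x
      · subst hux
        right
        exact ⟨hna v huv, fun h => G.ne_of_adj huv (by simpa using h.symm)⟩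
      · exact Or.inl ⟨hu, hux⟩
    · by_cases hvx : v = x
      · subst hvx
        left
        exact ⟨hna u huv.symm, fun h => G.ne_of_adj huv (by simpa using h)⟩
      · exact Or.inr ⟨hv, hvx⟩
  have heq := hmin _ Set.diff_subset hc
  have : x ∈ X \ {x} := by rw [heq]; exact hx
  simp at this

/-- If the complement of `{a,b}` is a vertex cover, there is a minimal vertex cover
avoiding `a` and `b`. -/
lemma aux_exists_min_cover_avoiding {V : Type*} [Fintype V] (G : SimpleGraph V) {a b : V}
    (hcov : G.IsVertexCover' {u | u ≠ a ∧ u ≠ b}) :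
    ∃ X : Set V, G.IsMinVertexCover X ∧ a ∉ X ∧ b ∉ X := by
  classical
  let F : Finset (Finset V) :=
    Finset.univ.filter (fun C => G.IsVertexCover' (↑C : Set V) ∧ a ∉ C ∧ b ∉ C)
  have hne : F.Nonempty := by
    refine ⟨Finset.univ.filter (fun u => u ≠ a ∧ u ≠ b), ?_⟩
    simp only [F, Finset.mem_filter, Finset.mem_univ, true_and]
    refine ⟨?_, by simp, by simp⟩
    have : (↑(Finset.univ.filter (fun u => u ≠ a ∧ u ≠ b)) : Set V)
        = {u | u ≠ a ∧ u ≠ b} := by ext u; simp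
    rw [this]; exact hcov
  obtain ⟨C, hCF, hminC⟩ := F.exists_min_image Finset.card hne
  simp only [F, Finset.mem_filter, Finset.mem_univ, true_and] at hCF
  obtain ⟨hCcov, haC, hbC⟩ := hCF
  refine ⟨↑C, ⟨hCcov, ?_⟩, by simpa using haC, by simpa using hbC⟩
  intro Y hYC hYcov
  have hYfin : Y.Finite := Set.toFinite Y
  have hsub : hYfin.toFinset ⊆ C := by
    intro u hu
    have : u ∈ Y := by simpa using hu
    exact_mod_cast hYC this
  have hYF : hYfin.toFinset ∈ F := by
    simp only [F, Finset.mem_filter, Finset.mem_univ, true_and]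
    refine ⟨by rw [Set.Finite.coe_toFinset]; exact hYcov, ?_, ?_⟩
    · intro h
      exact haC (hsub h)
    · intro h
      exact hbC (hsub h)
  have hcard := hminC _ hYF
  have heq := Finset.eq_of_subset_of_card_le hsub hcard
  calc Y = ↑hYfin.toFinset := (Set.Finite.coe_toFinset _).symm
    _ = ↑C := by rw [heq]

/-- for distinct non-adjacent `x, y`, the added edge `{x,y}` has
Property P in `Ĝ` iff no minimal vertex cover of `G` contains both `x` and `y`. -/
theorem propertyP_added_edge_iff {V : Type*} [Fintype V]
    (G : SimpleGraph V) (x y : V) (hne : x ≠ y) (hnadj : ¬ G.Adj x y) :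
    (SimpleGraph.fromEdgeSet (G.edgeSet ∪ {s(x, y)})).HasPropertyP x y ↔
      ∀ X : Set V, G.IsMinVertexCover X → ¬(x ∈ X ∧ y ∈ X) := by
  classical
  have hP : (SimpleGraph.fromEdgeSet (G.edgeSet ∪ {s(x, y)})).HasPropertyP x y ↔
      ∀ a b : V, G.Adj a x → G.Adj y b → a ≠ b ∧ G.Adj a b := by
    constructor
    · intro h a b hax hyb
      have hay : a ≠ y := fun h' => hnadj (h' ▸ hax).symm
      have hbx : b ≠ x := fun h' => hnadj (h' ▸ hyb).symm
      have hax' : (SimpleGraph.fromEdgeSet (G.edgeSet ∪ {s(x, y)})).Adj a x := by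
        rw [SimpleGraph.fromEdgeSet_adj]
        exact ⟨Or.inl (by rwa [SimpleGraph.mem_edgeSet]), G.ne_of_adj hax⟩
      have hyb' : (SimpleGraph.fromEdgeSet (G.edgeSet ∪ {s(x, y)})).Adj y b := by
        rw [SimpleGraph.fromEdgeSet_adj]
        exact ⟨Or.inl (by rwa [SimpleGraph.mem_edgeSet]), G.ne_of_adj hyb⟩
      obtain ⟨hab1, hab2⟩ := h a b hax' hay hyb' hbx
      refine ⟨hab1, ?_⟩
      rw [SimpleGraph.fromEdgeSet_adj] at hab2
      rcases hab2.1 with h1 | h1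
      · rwa [SimpleGraph.mem_edgeSet] at h1
      · exfalso
        simp only [Set.mem_singleton_iff, Sym2.eq_iff] at h1
        rcases h1 with ⟨h2, h3⟩ | ⟨h2, h3⟩
        · exact G.ne_of_adj hax (h2 ▸ rfl)
        · exact hay h2
    · intro h a b hax hay hyb hbx
      rw [SimpleGraph.fromEdgeSet_adj] at hax hyb
      have hax' : G.Adj a x := by
        rcases hax.1 with h1 | h1
        · rwa [SimpleGraph.mem_edgeSet] at h1
        · exfalso
          simp only [Set.mem_singleton_iff, Sym2.eq_iff] at h1
          rcases h1 with ⟨h2, h3⟩ | ⟨h2, h3⟩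
          · exact hne h3
          · exact hay h2
      have hyb' : G.Adj y b := by
        rcases hyb.1 with h1 | h1
        · rwa [SimpleGraph.mem_edgeSet] at h1
        · exfalso
          simp only [Set.mem_singleton_iff, Sym2.eq_iff] at h1
          rcases h1 with ⟨h2, h3⟩ | ⟨h2, h3⟩
          · exact hne h2.symm
          · exact hbx h3
      obtain ⟨hab1, hab2⟩ := h a b hax' hyb'
      refine ⟨hab1, ?_⟩
      rw [SimpleGraph.fromEdgeSet_adj]
      exact ⟨Or.inl (by rwa [SimpleGraph.mem_edgeSet]), hab1⟩
  rw [hP]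
  constructor
  · intro hp X hX hxy
    obtain ⟨hx, hy⟩ := hxy
    obtain ⟨a, hxa, haX⟩ := aux_exists_adj_not_mem G hX hx
    obtain ⟨b, hyb, hbX⟩ := aux_exists_adj_not_mem G hX hy
    obtain ⟨hab1, hab2⟩ := hp a b hxa.symm hyb
    rcases hX.1 hab2 with h | h
    · exact haX h
    · exact hbX h
  · intro h a b hax hyb
    by_contra hc
    have hc' : a = b ∨ ¬ G.Adj a b := by
      by_cases hab : a = b
      · exact Or.inl hab
      · exact Or.inr fun hadj => hc ⟨hab, hadj⟩
    have hcov : G.IsVertexCover' {u | u ≠ a ∧ u ≠ b} := by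
      intro u v huv
      by_contra hcon
      push_neg at hcon
      obtain ⟨hu, hv⟩ := hcon
      simp only [Set.mem_setOf_eq, not_and_or, not_not] at hu hv
      have hune : u ≠ v := G.ne_of_adj huv
      rcases hu with hu | hu <;> rcases hv with hv | hv <;> subst hu <;> subst hv
      · exact hune rfl
      · rcases hc' with h' | h'
        · exact hune h'
        · exact h' huv
      · rcases hc' with h' | h'
        · exact hune h'.symm
        · exact h' huv.symm
      · exact hune rfl
    obtain ⟨X, hXmin, haX, hbX⟩ := aux_exists_min_cover_avoiding G hcov
    have hx : x ∈ X := by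
      rcases hXmin.1 hax with h' | h'
      · exact absurd h' haX
      · exact h'
    have hy : y ∈ X := by
      rcases hXmin.1 hyb with h' | h'
      · exact h'
      · exact absurd h' hbX
    exact h X hXmin ⟨hx, hy⟩
end

section
/- Let G be a finite simple graph in which every vertex of some edge {x,y} satisfies Property P, and suppose Q is a minimal vertex cover of G containing both x and y. Then there exist vertices a ∉ Q adjacent to x and b ∉ Q adjacent to y; consequently (by Property P) {a,b} is an edge of G not covered by Q, a contradiction. Formally: if {x,y} has Property P then no minimal vertex cover of G contains both x and y. -/
/-- For a minimal vertex cover `Q` and `v ∈ Q`, there is a neighbor of `v` outside `Q`. -/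
lemma exists_private_neighbor {V : Type*} (G : SimpleGraph V) {Q : Set V}
    (hQ : G.IsMinVertexCover Q) {v : V} (hv : v ∈ Q) :
    ∃ w, w ∉ Q ∧ G.Adj v w := by
  by_contra h
  push_neg at h
  have hcov : G.IsVertexCover' (Q \ {v}) := by
    intro u w huw
    rcases hQ.1 huw with hu | hw
    · by_cases huv : u = v
      · subst huv
        right
        have hwQ : w ∈ Q := by
          by_contra hwQ
          exact (h w hwQ) huw
        exact ⟨hwQ, by simpa using (G.ne_of_adj huw).symm⟩
      · exact Or.inl ⟨hu, huv⟩
    · by_cases hwv : w = v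
      · subst hwv
        left
        have huQ : u ∈ Q := by
          by_contra huQ
          exact (h u huQ) huw.symm
        exact ⟨huQ, by simpa using G.ne_of_adj huw⟩
      · exact Or.inr ⟨hw, hwv⟩
  have heq := hQ.2 (Q \ {v}) Set.diff_subset hcov
  rw [← heq] at hv
  exact hv.2 rfl

/-- if the edge `{x,y}` has Property P, then no minimal vertex cover of `G`
contains both `x` and `y`. -/
theorem propertyP_implies_no_min_cover_both {V : Type*} [Fintype V]
    (G : SimpleGraph V) (x y : V) (hxy : G.Adj x y)
    (hP : G.HasPropertyP x y) :
    ∀ Q : Set V, G.IsMinVertexCover Q → ¬(x ∈ Q ∧ y ∈ Q) := by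
  rintro Q hQ ⟨hx, hy⟩
  obtain ⟨a, haQ, hax⟩ := exists_private_neighbor G hQ hx
  obtain ⟨b, hbQ, hyb⟩ := exists_private_neighbor G hQ hy
  have hay : a ≠ y := fun h => haQ (h ▸ hy)
  have hbx : b ≠ x := fun h => hbQ (h ▸ hx)
  obtain ⟨-, hab⟩ := hP a b hax.symm hay hyb hbx
  rcases hQ.1 hab with h | h
  · exact haQ h
  · exact hbQ h
end

section
/- Let G be a finite simple graph with edges e = {x,y} and f = {u,v} such that u, v, x, y are four distinct vertices, {u,v} has Property P in G, and the induced subgraph of G on {u,v,x,y} is not a 4-cycle. Let G_e be the graph (with a loop at x) obtained by identifying y with x. Then {u,v} has Property P in G_e. -/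
/-- A graph possibly with loops: a symmetric relation on `V`. -/
structure LoopGraph (V : Type*) where
  Adj : V → V → Prop
  symm : ∀ u v : V, Adj u v → Adj v u

/-- Property P for an edge `{u,v}` of a graph possibly with loops: neither endpoint has
a loop, and any neighbor of `u` (other than `v`) and any neighbor of `v` (other than `u`)
are distinct and adjacent. -/
def LoopGraph.HasPropertyP {V : Type*} (G : LoopGraph V) (u v : V) : Prop :=
  ¬ G.Adj u u ∧ ¬ G.Adj v v ∧
    ∀ a b : V, G.Adj a u → a ≠ v → G.Adj v b → b ≠ u → a ≠ b ∧ G.Adj a b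

/-- The contraction `G_e` of a simple graph along the edge `e = {x,y}`: identify `y`
with `x`; it acquires a loop at `x`. -/
def SimpleGraph.contractEdge {V : Type*} (G : SimpleGraph V) (x y : V) :
    LoopGraph {v : V // v ≠ y} where
  Adj a b := G.Adj a.1 b.1 ∨ (a.1 = x ∧ G.Adj y b.1) ∨ (b.1 = x ∧ G.Adj a.1 y)
  symm := by
    rintro ⟨a, ha⟩ ⟨b, hb⟩ (h | ⟨h1, h2⟩ | ⟨h1, h2⟩)
    · exact Or.inl h.symm
    · exact Or.inr (Or.inr ⟨h1, h2.symm⟩)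
    · exact Or.inr (Or.inl ⟨h1, h2.symm⟩)

/-- if `{u,v}` has Property P in `G`, the vertices `u,v,x,y` are distinct,
and the induced subgraph on `{u,v,x,y}` is not a 4-cycle, then `{u,v}` has Property P
in the contraction `G_e`, `e = {x,y}`. -/
theorem propertyP_descends_to_contraction {V : Type*} [Fintype V]
    (G : SimpleGraph V) (u v x y : V)
    (huv : G.Adj u v) (hxy : G.Adj x y)
    (huv' : u ≠ v) (hux : u ≠ x) (huy : u ≠ y) (hvx : v ≠ x) (hvy : v ≠ y)
    (hxy' : x ≠ y)
    (hP : G.HasPropertyP u v)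
    (hnc : ¬((G.Adj u x ∧ G.Adj v y ∧ ¬ G.Adj u y ∧ ¬ G.Adj v x) ∨
             (G.Adj u y ∧ G.Adj v x ∧ ¬ G.Adj u x ∧ ¬ G.Adj v y))) :
    (G.contractEdge x y).HasPropertyP ⟨u, huy⟩ ⟨v, hvy⟩ := by
  refine ⟨?_, ?_, ?_⟩
  · rintro (h | ⟨h1, h2⟩ | ⟨h1, h2⟩)
    · exact G.irrefl h
    · exact hux h1
    · exact hux h1
  · rintro (h | ⟨h1, h2⟩ | ⟨h1, h2⟩)
    · exact G.irrefl h
    · exact hvx h1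
    · exact hvx h1
  · rintro ⟨a, ha⟩ ⟨b, hb⟩ hau hav hvb hbu
    have hav' : a ≠ v := fun h => hav (Subtype.ext h)
    have hbu' : b ≠ u := fun h => hbu (Subtype.ext h)
    -- no contraction-created x-x edges via u or v since u ≠ x, v ≠ x
    have hau2 : G.Adj a u ∨ (a = x ∧ G.Adj y u) := by
      rcases hau with h | ⟨h1, h2⟩ | ⟨h1, h2⟩
      · exact Or.inl h
      · exact Or.inr ⟨h1, h2⟩
      · exact absurd h1 hux
    have hvb2 : G.Adj v b ∨ (b = x ∧ G.Adj v y) := by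
      rcases hvb with h | ⟨h1, h2⟩ | ⟨h1, h2⟩
      · exact Or.inl h
      · exact absurd h1 hvx
      · exact Or.inr ⟨h1, h2⟩
    have key : ∀ _ : G.Adj y u, ∀ _ : G.Adj v y, False := fun h1 h2 =>
      (hP y y h1 hvy.symm h2 huy.symm).1 rfl
    rcases hau2 with hau2 | ⟨hax, hyu⟩
    · rcases hvb2 with hvb2 | ⟨hbx, hvy2⟩
      · obtain ⟨hne, hadj⟩ := hP a b hau2 hav' hvb2 hbu'
        exact ⟨fun h => hne (congrArg Subtype.val h), Or.inl hadj⟩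
      · obtain ⟨hne, hadj⟩ := hP a y hau2 hav' hvy2 huy.symm
        refine ⟨?_, Or.inr (Or.inr ⟨hbx, hadj⟩)⟩
        intro h
        have hax : a = x := hbx ▸ congrArg Subtype.val h
        -- a = x: so Adj u x and Adj v y; 4-cycle avoidance gives Adj u y or Adj v x
        have hux2 : G.Adj u x := (hax ▸ hau2).symm
        by_cases hUY : G.Adj u y
        · exact key hUY.symm hvy2
        · by_cases hVX : G.Adj v x
          · exact (hP x x (hax ▸ hau2) hvx.symm hVX hux.symm).1 rfl
          · exact hnc (Or.inl ⟨hux2, hvy2, hUY, hVX⟩)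
    · rcases hvb2 with hvb2 | ⟨hbx, hvy2⟩
      · obtain ⟨hne, hadj⟩ := hP y b hyu hvy.symm hvb2 hbu'
        refine ⟨?_, Or.inr (Or.inl ⟨hax, hadj⟩)⟩
        intro h
        have hbx : b = x := hax ▸ (congrArg Subtype.val h).symm
        have hvx2 : G.Adj v x := hbx ▸ hvb2
        by_cases hUX : G.Adj u x
        · exact (hP x x hUX.symm hvx.symm hvx2 hux.symm).1 rfl
        · by_cases hVY : G.Adj v y
          · exact key hyu hVY
          · exact hnc (Or.inr ⟨hyu.symm, hvx2, hUX, hVY⟩)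
      · exact absurd (key hyu hvy2) not_false
end

section
/- Let G be a finite simple graph with a perfect matching M = {{x_1,y_1},…,{x_t,y_t}} such that every edge of M has Property P and for each i ≥ 2, N(x_i) ∩ {x_1,y_1,…,x_{i−1},y_{i−1}} = ∅. Then the set {x_1,…,x_t} is an independent set of G and {y_1,…,y_t} is a vertex cover of G of cardinality t = |V(G)|/2. -/
/-- given a perfect matching `{x_i, y_i}` with Property P such that each
`x_i` has no neighbor among the earlier matched vertices, the `x_i` form an independent
set and the `y_i` form a vertex cover of cardinality `t = |V|/2`. -/
theorem matching_gives_independent_and_cover {V : Type*} [Fintype V]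
    (G : SimpleGraph V) (t : ℕ) (x y : Fin t → V)
    (hperf : Function.Bijective (fun i : Fin t ⊕ Fin t => Sum.elim x y i))
    (hedge : ∀ i : Fin t, G.Adj (x i) (y i))
    (hP : ∀ i : Fin t, G.HasPropertyP (x i) (y i))
    (hsep : ∀ i j : Fin t, j < i →
      ¬ G.Adj (x i) (x j) ∧ ¬ G.Adj (x i) (y j)) :
    (∀ i j : Fin t, ¬ G.Adj (x i) (x j)) ∧
      G.IsVertexCover' (Set.range y) ∧
      (Set.range y).ncard = t ∧ 2 * t = Fintype.card V := by
  have hind : ∀ i j : Fin t, ¬ G.Adj (x i) (x j) := by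
    intro i j hadj
    rcases lt_trichotomy j i with h | h | h
    · exact (hsep i j h).1 hadj
    · exact G.irrefl (h ▸ hadj)
    · exact (hsep j i h).1 hadj.symm
  refine ⟨hind, ?_, ?_, ?_⟩
  · intro u v huv
    obtain ⟨i, hi⟩ := hperf.surjective u
    obtain ⟨j, hj⟩ := hperf.surjective v
    rcases i with i | i
    · rcases j with j | j
      · simp only [Sum.elim_inl] at hi hj
        exact absurd (hi ▸ hj ▸ huv) (hind i j)
      · exact Or.inr ⟨j, hj⟩
    · exact Or.inl ⟨i, hi⟩
  · have hyinj : Function.Injective y := by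
      intro i j h
      have := hperf.injective (a₁ := Sum.inr i) (a₂ := Sum.inr j) h
      simpa using this
    have : (Set.range y).ncard = Nat.card (Fin t) := Nat.card_range_of_injective hyinj ▸ (Nat.card_coe_set_eq _).symm
    simpa using this
  · have := Fintype.card_of_bijective hperf
    simpa [Fintype.card_sum, two_mul] using this
end

section
/- Let G be a finite simple graph without isolated vertices admitting a perfect matching M such that every edge of M has Property P. Then every minimal vertex cover of G has cardinality exactly |V(G)|/2 (i.e., G is very well-covered). -/
/-- a graph without isolated vertices admitting a perfect matching all of
whose edges have Property P is very well-covered: every minimal vertex cover has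
cardinality `|V|/2`. -/
theorem very_well_covered_of_perfect_matching_propertyP {V : Type*} [Fintype V]
    (G : SimpleGraph V) (hniso : ∀ v : V, ∃ w : V, G.Adj v w)
    (t : ℕ) (x y : Fin t → V)
    (hperf : Function.Bijective (fun i : Fin t ⊕ Fin t => Sum.elim x y i))
    (hedge : ∀ i : Fin t, G.Adj (x i) (y i))
    (hP : ∀ i : Fin t, G.HasPropertyP (x i) (y i)) :
    ∀ X : Set V, G.IsMinVertexCover X → 2 * X.ncard = Fintype.card V := by
  classical
  intro X hX
  -- every vertex of a minimal cover has a private neighbor outside the cover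
  have hpriv : ∀ v ∈ X, ∃ w, G.Adj v w ∧ w ∉ X := by
    intro v hv
    by_contra h
    push_neg at h
    have hcov : G.IsVertexCover' (X \ {v}) := by
      intro u w huw
      rcases hX.1 huw with hu | hw
      · by_cases huv : u = v
        · subst huv
          exact Or.inr ⟨h w huw, huw.ne'⟩
        · exact Or.inl ⟨hu, huv⟩
      · by_cases hwv : w = v
        · subst hwv
          exact Or.inl ⟨h u huw.symm, huw.ne⟩
        · exact Or.inr ⟨hw, hwv⟩
    have heq := hX.2 (X \ {v}) Set.diff_subset hcov
    have : v ∈ X \ {v} := by rw [heq]; exact hv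
    exact this.2 rfl
  -- each matching edge is regular for X
  have hreg : ∀ i : Fin t, ¬(x i ∈ X ∧ y i ∈ X) := by
    rintro i ⟨hx, hy⟩
    obtain ⟨a, hax, haX⟩ := hpriv (x i) hx
    obtain ⟨b, hyb, hbX⟩ := hpriv (y i) hy
    have hay : a ≠ y i := fun h => haX (h ▸ hy)
    have hbx : b ≠ x i := fun h => hbX (h ▸ hx)
    obtain ⟨hne, hab⟩ := hP i a b hax.symm hay hyb hbx
    rcases hX.1 hab with h | h
    · exact haX h
    · exact hbX h
  have hinj := hperf.1
  have hxinj : ∀ i j : Fin t, x i = x j → i = j := by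
    intro i j h
    have := hinj (a₁ := Sum.inl i) (a₂ := Sum.inl j) h
    exact Sum.inl.inj this
  have hyinj : ∀ i j : Fin t, y i = y j → i = j := by
    intro i j h
    have := hinj (a₁ := Sum.inr i) (a₂ := Sum.inr j) h
    exact Sum.inr.inj this
  have hxy : ∀ i j : Fin t, x i ≠ y j := by
    intro i j h
    have := hinj (a₁ := Sum.inl i) (a₂ := Sum.inr j) h
    simp at this
  -- the selector function
  set s : Fin t → V := fun i => if x i ∈ X then x i else y i with hs
  have hsinj : Function.Injective s := by
    intro i j hij
    simp only [hs] at hij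
    by_cases hi : x i ∈ X <;> by_cases hj : x j ∈ X <;>
      simp [hi, hj] at hij
    · exact hxinj i j hij
    · exact absurd hij (hxy i j)
    · exact absurd hij.symm (hxy j i)
    · exact hyinj i j hij
  have hXeq : X = Set.range s := by
    ext v
    constructor
    · intro hv
      obtain ⟨w, hw⟩ := hperf.2 v
      cases w with
      | inl i =>
        refine ⟨i, ?_⟩
        simp only [hs]
        rw [show x i = v from hw] at *
        simp [hv]
      | inr i =>
        refine ⟨i, ?_⟩
        simp only [hs]
        have hyi : y i = v := hw
        have : x i ∉ X := fun hc => hreg i ⟨hc, hyi ▸ hv⟩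
        simp [this, hyi]
    · rintro ⟨i, rfl⟩
      simp only [hs]
      by_cases hi : x i ∈ X
      · simp only [if_pos hi]; exact hi
      · rcases hX.1 (hedge i) with h | h
        · exact absurd h hi
        · simpa [hi] using h
  have hncard : X.ncard = t := by
    rw [hXeq, ← Set.image_univ, Set.ncard_image_of_injective _ hsinj,
      Set.ncard_univ, Nat.card_eq_fintype_card, Fintype.card_fin]
  have hcardV : Fintype.card V = t + t := by
    have := Fintype.card_congr (Equiv.ofBijective _ hperf)
    rw [Fintype.card_sum, Fintype.card_fin] at this
    omega
  omega
end

section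
/- Let G be a finite simple graph without isolated vertices having a perfect matching M = {e_1,…,e_d} where each e_i = {x_i,y_i} has Property P and N(x_i) ∩ {x_1,y_1,…,x_{i−1},y_{i−1}} = ∅ for 2 ≤ i ≤ d. Then for each k, the k-th entry h_k of the h-vector of R/I(G) equals the number of k-element subsets of M that form an induced matching of G. -/
open MvPolynomial Finset

/-- The edge ideal of a simple graph. -/
noncomputable def SimpleGraph.edgeIdeal (k : Type*) [Field k] {V : Type*}
    (G : SimpleGraph V) : Ideal (MvPolynomial V k) :=
  Ideal.span {p | ∃ u v : V, G.Adj u v ∧ p = X u * X v}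

/-- The Hilbert series of `R/I` for `R = k[σ]` graded by total degree:
`Σ_s dim_k (R/I)_s t^s`. -/
noncomputable def quotHilbertSeries (k : Type*) [Field k] (σ : Type*)
    (I : Ideal (MvPolynomial σ k)) : PowerSeries ℤ :=
  PowerSeries.mk fun s =>
    (Module.finrank k
      (Submodule.map (Ideal.Quotient.mkₐ k I).toLinearMap
        (MvPolynomial.homogeneousSubmodule σ k s)) : ℤ)

namespace HVec

variable {V : Type*} (G : SimpleGraph V) {d : ℕ} (x y : Fin d → V)

/-- The vertex selected in edge `i` by a boolean choice. -/
def sel (i : Fin d) (b : Bool) : V := if b then y i else x i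

@[simp] lemma sel_true {i : Fin d} : sel x y i true = y i := rfl
@[simp] lemma sel_false {i : Fin d} : sel x y i false = x i := rfl

/-- A partial selection is independent. -/
def IndepO (f : Fin d → Option Bool) : Prop :=
  ∀ i j : Fin d, i ≠ j → ∀ a b : Bool, f i = some a → f j = some b →
    ¬ G.Adj (sel x y i a) (sel x y j b)

/-- A total selection is independent (a facet of the independence complex). -/
def IndepT (g : Fin d → Bool) : Prop :=
  ∀ i j : Fin d, i ≠ j → ¬ G.Adj (sel x y i (g i)) (sel x y j (g j))

/-- Induced-matching condition on a set of matching-edge indices. -/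
def IsIM (S : Finset (Fin d)) : Prop :=
  ∀ i ∈ S, ∀ i' ∈ S, i ≠ i' →
    ¬ G.Adj (x i) (x i') ∧ ¬ G.Adj (x i) (y i') ∧ ¬ G.Adj (y i) (y i')

open Classical in
/-- Canonical completion of a partial selection to a total one, processing
coordinates from the top: an undetermined coordinate gets `false` (vertex `x i`)
unless forced to `true` by an adjacency with a later selected `y j`. -/
noncomputable def comp (f : Fin d → Option Bool) (i : Fin d) : Bool :=
  match f i with
  | some b => b
  | none =>
    if ∃ j : {j : Fin d // i < j}, comp f j.1 = true ∧ G.Adj (x i) (y j.1) then true else false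
termination_by d - i.val
decreasing_by
  all_goals
    first
      | (have h2 := j.2; simp only [Fin.lt_def] at h2 ⊢; omega)
      | (have h2 := a.2; simp only [Fin.lt_def] at h2 ⊢; omega)

variable {G x y}

lemma comp_some {f : Fin d → Option Bool} {i : Fin d} {b : Bool} (h : f i = some b) :
    comp G x y f i = b := by
  rw [comp, h]

lemma comp_none {f : Fin d → Option Bool} {i : Fin d} (h : f i = none) :
    comp G x y f i = true ↔
      ∃ j, i < j ∧ comp G x y f j = true ∧ G.Adj (x i) (y j) := by
  rw [comp, h]
  constructor
  · intro hif
    by_cases hc : ∃ j : {j : Fin d // i < j}, comp G x y f j.1 = true ∧ G.Adj (x i) (y j.1)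
    · obtain ⟨j, h1, h2⟩ := hc; exact ⟨j.1, j.2, h1, h2⟩
    · rw [if_neg hc] at hif; exact absurd hif (by simp)
  · rintro ⟨j, hij, h1, h2⟩
    rw [if_pos ⟨⟨j, hij⟩, h1, h2⟩]

lemma comp_none_false {f : Fin d → Option Bool} {i : Fin d} (h : f i = none)
    (h2 : ¬ ∃ j, i < j ∧ comp G x y f j = true ∧ G.Adj (x i) (y j)) :
    comp G x y f i = false := by
  cases hcv : comp G x y f i with
  | false => rfl
  | true => exact absurd ((comp_none h).1 hcv) h2

/-- `f` extended by the completion values `c` on coordinates `≥ t`. -/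
def ext (f : Fin d → Option Bool) (c : Fin d → Bool) (t : ℕ) : Fin d → Option Bool :=
  fun j => if t ≤ j.val then some (c j) else f j

lemma ext_le {f : Fin d → Option Bool} {c : Fin d → Bool} {t : ℕ} {j : Fin d}
    (h : t ≤ j.val) : ext f c t j = some (c j) := if_pos h

lemma ext_gt {f : Fin d → Option Bool} {c : Fin d → Bool} {t : ℕ} {j : Fin d}
    (h : j.val < t) : ext f c t j = f j := if_neg (by omega)

variable (G x y) in
open Classical in
/-- The coordinates where a facet takes value `true` without being forced. -/
noncomputable def sig (g : Fin d → Bool) : Finset (Fin d) :=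
  univ.filter (fun i => g i = true ∧ ¬ ∃ j, i < j ∧ g j = true ∧ G.Adj (x i) (y j))

/-- The partial selection choosing `y i` exactly for `i ∈ S`. -/
def toPartial (S : Finset (Fin d)) : Fin d → Option Bool :=
  fun i => if i ∈ S then some true else none

lemma mem_sig {g : Fin d → Bool} {i : Fin d} :
    i ∈ sig G x y g ↔ g i = true ∧ ¬ ∃ j, i < j ∧ g j = true ∧ G.Adj (x i) (y j) := by
  simp [sig]

section Hyps

variable (hinj : Function.Injective (fun i : Fin d ⊕ Fin d => Sum.elim x y i))
variable (hP : ∀ i : Fin d, G.HasPropertyP (x i) (y i))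
variable (hsep : ∀ i j : Fin d, j < i → ¬ G.Adj (x i) (x j) ∧ ¬ G.Adj (x i) (y j))

include hinj in
lemma sel_inj {i j : Fin d} {a b : Bool} (h : sel x y i a = sel x y j b) :
    i = j ∧ a = b := by
  have key : ∀ (i : Fin d) (a : Bool), sel x y i a =
      (fun i : Fin d ⊕ Fin d => Sum.elim x y i) (if a then Sum.inr i else Sum.inl i) := by
    intro i a; cases a <;> rfl
  rw [key, key] at h
  have h2 := hinj h
  cases a <;> cases b <;> simp_all

include hsep in
lemma noxx {i j : Fin d} (hij : i ≠ j) : ¬ G.Adj (x i) (x j) := by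
  rcases lt_or_gt_of_ne hij with h | h
  · exact fun ha => (hsep j i h).1 ha.symm
  · exact (hsep i j h).1

include hinj hP hsep in
theorem indepO_ext {f : Fin d → Option Bool} (hf : IndepO G x y f) :
    ∀ n t, d ≤ t + n → IndepO G x y (ext f (comp G x y f) t) := by
  intro n
  induction n with
  | zero =>
    intro t hle i j hij a b ha hb
    rw [ext_gt (by omega)] at ha
    rw [ext_gt (by omega)] at hb
    exact hf i j hij a b ha hb
  | succ n IH =>
    intro t hle
    by_cases htd : d ≤ t + n
    · exact IH t htd
    have htlt : t < d := by omega
    set t' : Fin d := ⟨t, htlt⟩ with ht'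
    have hIH := IH (t + 1) (by omega)
    have hagree : ∀ j : Fin d, j ≠ t' →
        ext f (comp G x y f) t j = ext f (comp G x y f) (t + 1) j := by
      intro j hj
      have hne : j.val ≠ t := fun hv => hj (Fin.ext hv)
      by_cases hc : t ≤ j.val
      · rw [ext_le hc, ext_le (by omega)]
      · rw [ext_gt (by omega), ext_gt (by omega)]
    have key : ∀ j : Fin d, j ≠ t' → ∀ b : Bool,
        ext f (comp G x y f) (t + 1) j = some b →
        ¬ G.Adj (sel x y t' (comp G x y f t')) (sel x y j b) := by
      intro j hj b hb
      cases hft' : f t' with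
      | some b0 =>
        rw [comp_some hft']
        exact hIH t' j (fun h => hj h.symm) b0 b
          (by rw [ext_gt (Nat.lt_succ_self t)]; exact hft') hb
      | none =>
        by_cases hforce : ∃ j2, t' < j2 ∧ comp G x y f j2 = true ∧ G.Adj (x t') (y j2)
        · rw [(comp_none hft').2 hforce]
          obtain ⟨j0, hj0lt, hj0c, hj0adj⟩ := hforce
          intro hadj
          rw [sel_true] at hadj
          have hane : y j0 ≠ y t' := fun h =>
            absurd (sel_inj hinj (i := j0) (j := t') (a := true) (b := true) h).1
              (Fin.ne_of_gt hj0lt)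
          have hbne : sel x y j b ≠ x t' := fun h =>
            hj (sel_inj hinj (i := j) (j := t') (b := false) h).1
          obtain ⟨hne2, hadj2⟩ := hP t' (y j0) (sel x y j b) hj0adj.symm hane hadj hbne
          have hj0val : t + 1 ≤ j0.val := by
            have : t < j0.val := hj0lt
            omega
          have hj0mem : ext f (comp G x y f) (t + 1) j0 = some true := by
            rw [ext_le hj0val, hj0c]
          by_cases hjj0 : j = j0
          · subst hjj0
            rw [hb] at hj0mem
            cases hj0mem
            exact hne2 rfl
          · exact hIH j0 j (fun h => hjj0 h.symm) true b hj0mem hb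
              (by rwa [sel_true])
        · rw [comp_none_false hft' hforce]
          intro hadj
          rw [sel_false] at hadj
          cases b with
          | false => exact noxx hsep (fun h : t' = j => hj h.symm) (by rwa [sel_false] at hadj)
          | true =>
            rw [sel_true] at hadj
            rcases lt_or_gt_of_ne (fun h : j = t' => hj h) with hlt | hgt
            · exact (hsep t' j hlt).2 hadj
            · have hjval : t + 1 ≤ j.val := by
                have : t < j.val := hgt
                omega
              rw [ext_le hjval] at hb
              have hcj : comp G x y f j = true := Option.some_injective _ hb
              exact hforce ⟨j, hgt, hcj, hadj⟩
    intro i j hij a b ha hb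
    by_cases hit : i = t' <;> by_cases hjt : j = t'
    · exact absurd (hit.trans hjt.symm) hij
    · subst hit
      rw [ext_le (le_refl t)] at ha
      have ha' : a = comp G x y f t' := (Option.some_injective _ ha).symm
      rw [ha']
      exact key j hjt b (by rw [← hagree j hjt]; exact hb)
    · subst hjt
      rw [ext_le (le_refl t)] at hb
      have hb' : b = comp G x y f t' := (Option.some_injective _ hb).symm
      rw [hb']
      intro hadj
      exact key i hit a (by rw [← hagree i hit]; exact ha) hadj.symm
    · exact hIH i j hij a b (by rw [← hagree i hit]; exact ha)
        (by rw [← hagree j hjt]; exact hb)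

include hinj hP hsep in
theorem indepT_comp {f : Fin d → Option Bool} (hf : IndepO G x y f) :
    IndepT G x y (comp G x y f) := by
  intro i j hij
  exact indepO_ext hinj hP hsep hf d 0 (by omega) i j hij _ _
    (ext_le (by omega)) (ext_le (by omega))

include hinj hP hsep in
lemma chainL {S : Finset (Fin d)} (hS : IsIM G x y S) :
    ∀ n, ∀ i : Fin d, d ≤ i.val + n → comp G x y (toPartial S) i = true →
      ∀ b, G.Adj (y i) b → b ≠ x i →
      ∃ l, l ∈ S ∧ i ≤ l ∧ G.Adj (y l) b ∧ b ≠ y l ∧ b ≠ x l := by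
  intro n
  induction n with
  | zero => intro i hle; exact absurd i.isLt (by omega)
  | succ n IH =>
    intro i hle hgi b hadj hbx
    by_cases hiS : i ∈ S
    · exact ⟨i, hiS, le_refl i, hadj, fun h => hadj.ne h.symm, hbx⟩
    · have hfi : toPartial S i = none := if_neg hiS
      obtain ⟨j, hij, hgj, hadjxy⟩ := (comp_none hfi).1 hgi
      have hyne : y j ≠ y i := fun h =>
        absurd (sel_inj hinj (i := j) (j := i) (a := true) (b := true) h).1 (Fin.ne_of_gt hij)
      obtain ⟨hne2, hadj2⟩ := hP i (y j) b hadjxy.symm hyne hadj hbx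
      have hbxj : b ≠ x j := fun h => (hsep j i hij).2 ((h ▸ hadj).symm)
      obtain ⟨l, hlS, hjl, h3, h4, h5⟩ := IH j
        (by have : i.val < j.val := hij; omega) hgj b hadj2 hbxj
      exact ⟨l, hlS, le_trans (le_of_lt hij) hjl, h3, h4, h5⟩

include hinj hP hsep in
lemma sig_comp_toPartial {S : Finset (Fin d)} (hS : IsIM G x y S) :
    sig G x y (comp G x y (toPartial S)) = S := by
  ext i
  rw [mem_sig]
  constructor
  · rintro ⟨hgi, hnf⟩
    by_contra hiS
    exact hnf ((comp_none (if_neg hiS : toPartial S i = none)).1 hgi)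
  · intro hiS
    refine ⟨comp_some (if_pos hiS : toPartial S i = some true), ?_⟩
    rintro ⟨j, hij, hgj, hadj⟩
    have hxne : x i ≠ x j := fun h =>
      absurd (sel_inj hinj (i := i) (j := j) (a := false) (b := false) h).1 (Fin.ne_of_lt hij)
    obtain ⟨l, hlS, hjl, h3, h4, h5⟩ := chainL hinj hP hsep hS d j (by omega) hgj
      (x i) hadj.symm hxne
    have hil : i ≠ l := by
      have h6 : i.val < j.val := hij
      have h7 : j.val ≤ l.val := hjl
      exact fun h => by rw [h] at h6; omega
    exact (hS i hiS l hlS hil).2.1 h3.symm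

include hsep in
lemma isIM_sig {g : Fin d → Bool} (hg : IndepT G x y g) : IsIM G x y (sig G x y g) := by
  intro i hi i' hi' hne
  rw [mem_sig] at hi hi'
  obtain ⟨h1, h2⟩ := hi
  obtain ⟨h1', h2'⟩ := hi'
  refine ⟨noxx hsep hne, ?_, ?_⟩
  · rcases lt_or_gt_of_ne hne with h | h
    · exact fun hadj => h2 ⟨i', h, h1', hadj⟩
    · exact (hsep i i' h).2
  · have := hg i i' hne
    rwa [h1, h1', sel_true, sel_true] at this

lemma indepO_toPartial {S : Finset (Fin d)} (hS : IsIM G x y S) :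
    IndepO G x y (toPartial S) := by
  intro i j hij a b ha hb
  by_cases hiS : i ∈ S
  · by_cases hjS : j ∈ S
    · simp only [toPartial, if_pos hiS] at ha
      simp only [toPartial, if_pos hjS] at hb
      obtain rfl : true = a := Option.some_injective _ ha
      obtain rfl : true = b := Option.some_injective _ hb
      rw [sel_true, sel_true]
      exact (hS i hiS j hjS hij).2.2
    · simp only [toPartial, if_neg hjS] at hb
      exact absurd hb (by simp)
  · simp only [toPartial, if_neg hiS] at ha
    exact absurd ha (by simp)

lemma comp_eq_iff {g : Fin d → Bool} (hg : IndepT G x y g) (f : Fin d → Option Bool) :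
    comp G x y f = g ↔
      (∀ i a, f i = some a → a = g i) ∧ (∀ i ∈ sig G x y g, (f i).isSome) := by
  constructor
  · rintro rfl
    refine ⟨fun i a ha => (comp_some ha).symm, fun i hi => ?_⟩
    rw [mem_sig] at hi
    obtain ⟨h1, h2⟩ := hi
    cases hfi : f i with
    | some a => rfl
    | none => rw [comp_none_false hfi h2] at h1; exact absurd h1 (by simp)
  · rintro ⟨hle, hdom⟩
    funext i
    suffices h : ∀ n, ∀ i : Fin d, d ≤ i.val + n → comp G x y f i = g i from
      h d i (by omega)
    intro n
    induction n with
    | zero => intro i hle2; exact absurd i.isLt (by omega)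
    | succ n IH =>
      intro i hle2
      cases hfi : f i with
      | some a => rw [comp_some hfi, hle i a hfi]
      | none =>
        have hiff : (∃ j, i < j ∧ comp G x y f j = true ∧ G.Adj (x i) (y j)) ↔
            (∃ j, i < j ∧ g j = true ∧ G.Adj (x i) (y j)) := by
          constructor <;> rintro ⟨j, hij, hcj, hadj⟩ <;>
            refine ⟨j, hij, ?_, hadj⟩
          · rw [← IH j (by have : i.val < j.val := hij; omega)]; exact hcj
          · rw [IH j (by have : i.val < j.val := hij; omega)]; exact hcj
        cases hgi : g i with
        | true =>
          by_cases hforce : ∃ j, i < j ∧ g j = true ∧ G.Adj (x i) (y j)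
          · exact (comp_none hfi).2 (hiff.2 hforce)
          · have : i ∈ sig G x y g := by rw [mem_sig]; exact ⟨hgi, hforce⟩
            have := hdom i this
            rw [hfi] at this
            exact absurd this (by simp)
        | false =>
          refine comp_none_false hfi ?_
          rintro ⟨j, hij, hcj, hadj⟩
          obtain ⟨j', hij', hgj', hadj'⟩ := hiff.1 ⟨j, hij, hcj, hadj⟩
          have := hg i j' (Fin.ne_of_lt hij')
          rw [hgi, hgj', sel_false, sel_true] at this
          exact this hadj'

open Classical in
include hinj hP hsep in
theorem sum_claim3 (A : Type*) [CommRing A] (u : A) :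
    ∑ f ∈ univ.filter (IndepO G x y),
        u ^ (univ.filter fun i => (f i).isSome).card *
          (1 - u) ^ (d - (univ.filter fun i => (f i).isSome).card) =
      ∑ S ∈ univ.filter (IsIM G x y), u ^ S.card := by
  classical
  set F : (Fin d → Option Bool) → A := fun f =>
    u ^ (univ.filter fun i => (f i).isSome).card *
      (1 - u) ^ (d - (univ.filter fun i => (f i).isSome).card) with hF
  -- Step 1 : fiber the sum over the completion map
  rw [← Finset.sum_fiberwise_of_maps_to (g := comp G x y)
    (t := univ.filter (IndepT G x y))
    (fun f hf => by
      rw [mem_filter] at hf ⊢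
      exact ⟨mem_univ _, indepT_comp hinj hP hsep hf.2⟩) F]
  -- Step 2+3 : each fiber sums to u ^ (sig g).card
  have step2 : ∀ g ∈ univ.filter (IndepT G x y),
      ∑ f ∈ (univ.filter (IndepO G x y)).filter (fun f => comp G x y f = g), F f =
        u ^ (sig G x y g).card := by
    intro g hg
    rw [mem_filter] at hg
    have hgT := hg.2
    set σ := sig G x y g with hσ
    have hσdle : σ.card ≤ d := by
      calc σ.card ≤ (univ : Finset (Fin d)).card := card_le_card (subset_univ _)
      _ = d := by rw [card_univ, Fintype.card_fin]
    have hUcard : (univ \ σ).card = d - σ.card := by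
      rw [card_sdiff_of_subset (subset_univ _), card_univ, Fintype.card_fin]
    have key : ∑ f ∈ (univ.filter (IndepO G x y)).filter (fun f => comp G x y f = g), F f =
        ∑ T ∈ (univ \ σ).powerset, u ^ (σ.card + T.card) * (1 - u) ^ (d - σ.card - T.card) := by
      refine Finset.sum_bij' (i := fun f _ => (univ.filter fun i => (f i).isSome) \ σ)
        (j := fun T _ => fun i => if i ∈ σ ∪ T then some (g i) else none)
        ?_ ?_ ?_ ?_ ?_
      · intro f hf
        rw [mem_powerset]
        exact sdiff_subset_sdiff (subset_univ _) (le_refl σ)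
      · intro T hT
        rw [mem_powerset] at hT
        have hTσ : Disjoint T σ := by
          refine Finset.disjoint_left.2 fun a haT haσ => ?_
          have := hT haT
          rw [mem_sdiff] at this
          exact this.2 haσ
        rw [mem_filter, mem_filter]
        have hle : ∀ i a, (if i ∈ σ ∪ T then some (g i) else none) = some a → a = g i := by
          intro i a h
          by_cases hmem : i ∈ σ ∪ T
          · rw [if_pos hmem] at h; exact (Option.some_injective _ h).symm
          · rw [if_neg hmem] at h; exact absurd h (by simp)
        have hdom : ∀ i ∈ σ, (if i ∈ σ ∪ T then some (g i) else none).isSome := by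
          intro i hi
          rw [if_pos (mem_union_left _ hi)]; rfl
        refine ⟨⟨mem_univ _, ?_⟩, ?_⟩
        · intro i j hij a b ha hb
          rw [hle i a ha, hle j b hb]
          exact hgT i j hij
        · exact (comp_eq_iff hgT _).2 ⟨hle, hdom⟩
      · intro f hf
        rw [mem_filter, mem_filter] at hf
        obtain ⟨⟨-, hfO⟩, hfc⟩ := hf
        obtain ⟨hle, hdom⟩ := (comp_eq_iff hgT f).1 hfc
        have hσsub : σ ⊆ univ.filter fun i => (f i).isSome := by
          intro i hi
          rw [mem_filter]
          exact ⟨mem_univ _, hdom i hi⟩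
        funext i
        have hunion : σ ∪ ((univ.filter fun i => (f i).isSome) \ σ) =
            univ.filter fun i => (f i).isSome := by
          rw [Finset.union_sdiff_of_subset hσsub]
        show (if i ∈ σ ∪ ((univ.filter fun i => (f i).isSome) \ σ) then some (g i) else none)
          = f i
        rw [hunion]
        by_cases hi : i ∈ univ.filter fun i => (f i).isSome
        · rw [if_pos hi]
          rw [mem_filter] at hi
          obtain ⟨a, ha⟩ := Option.isSome_iff_exists.1 hi.2
          rw [ha, hle i a ha]
        · rw [if_neg hi]
          rw [mem_filter] at hi
          push_neg at hi
          cases hfi : f i with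
          | some a => exact absurd (by rw [hfi]; rfl) (hi (mem_univ _))
          | none => rfl
      · intro T hT
        rw [mem_powerset] at hT
        have hTσ : ∀ a ∈ T, a ∉ σ := by
          intro a haT
          have := hT haT
          rw [mem_sdiff] at this
          exact this.2
        have : (univ.filter fun i =>
            (if i ∈ σ ∪ T then some (g i) else none).isSome) = σ ∪ T := by
          ext i
          rw [mem_filter]
          by_cases hmem : i ∈ σ ∪ T
          · simp [hmem]
          · simp [hmem]
        show (univ.filter fun i =>
            ((if i ∈ σ ∪ T then some (g i) else none)).isSome) \ σ = T
        rw [this]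
        ext a
        rw [mem_sdiff, mem_union]
        constructor
        · rintro ⟨h1 | h1, h2⟩
          · exact absurd h1 h2
          · exact h1
        · intro ha
          exact ⟨Or.inr ha, hTσ a ha⟩
      · intro f hf
        rw [mem_filter, mem_filter] at hf
        obtain ⟨⟨-, hfO⟩, hfc⟩ := hf
        obtain ⟨hle, hdom⟩ := (comp_eq_iff hgT f).1 hfc
        have hσsub : σ ⊆ univ.filter fun i => (f i).isSome := by
          intro i hi
          rw [mem_filter]
          exact ⟨mem_univ _, hdom i hi⟩
        have hcard : (univ.filter fun i => (f i).isSome).card =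
            σ.card + ((univ.filter fun i => (f i).isSome) \ σ).card := by
          rw [card_sdiff_of_subset hσsub]
          have := card_le_card hσsub
          omega
        rw [hF]
        simp only
        rw [hcard, Nat.sub_sub]
    rw [key]
    have expand : ∀ T ∈ (univ \ σ).powerset,
        u ^ (σ.card + T.card) * (1 - u) ^ (d - σ.card - T.card) =
          u ^ σ.card * ((∏ _i ∈ T, u) * ∏ _i ∈ (univ \ σ) \ T, (1 - u)) := by
      intro T hT
      rw [mem_powerset] at hT
      rw [prod_const, prod_const, card_sdiff_of_subset hT, hUcard, pow_add, mul_assoc]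
    rw [Finset.sum_congr rfl expand, ← Finset.mul_sum, ← Finset.prod_add]
    simp
  rw [Finset.sum_congr rfl step2]
  -- Step 4 : reindex facets by their sigma sets
  refine Finset.sum_bij' (i := fun g _ => sig G x y g)
    (j := fun S _ => comp G x y (toPartial S)) ?_ ?_ ?_ ?_ ?_
  · intro g hg
    rw [mem_filter] at hg
    rw [mem_filter]
    exact ⟨mem_univ _, isIM_sig hsep hg.2⟩
  · intro S hS
    rw [mem_filter] at hS
    rw [mem_filter]
    exact ⟨mem_univ _, indepT_comp hinj hP hsep (indepO_toPartial hS.2)⟩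
  · intro g hg
    rw [mem_filter] at hg
    have hgT := hg.2
    refine ((comp_eq_iff hgT _).2 ⟨?_, ?_⟩)
    · intro i a ha
      by_cases hi : i ∈ sig G x y g
      · simp only [toPartial, if_pos hi] at ha
        have h1 : a = true := (Option.some_injective _ ha).symm
        rw [h1, ((mem_sig).1 hi).1]
      · simp only [toPartial, if_neg hi] at ha
        exact absurd ha (by simp)
    · intro i hi
      simp only [toPartial, if_pos hi]
      rfl
  · intro S hS
    rw [mem_filter] at hS
    exact sig_comp_toPartial hinj hP hsep hS.2
  · intro g hg; rfl

end Hyps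

section Alg

variable (k : Type*) [Field k]

/-- A polynomial in the edge ideal has zero coefficient on every monomial whose
support is an independent set. -/
lemma coeff_eq_zero_of_mem_edgeIdeal {p : MvPolynomial V k} (hp : p ∈ G.edgeIdeal k) :
    ∀ m : V →₀ ℕ, (∀ u ∈ m.support, ∀ v ∈ m.support, ¬ G.Adj u v) →
    coeff m p = 0 := by
  classical
  refine id (Submodule.span_induction
    (p := fun q _ => ∀ m : V →₀ ℕ,
      (∀ u ∈ m.support, ∀ v ∈ m.support, ¬ G.Adj u v) → coeff m q = 0)
    ?_ ?_ ?_ ?_ hp)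
  · rintro q ⟨u, v, huv, rfl⟩ m hm
    rw [X, X, monomial_mul, coeff_monomial]
    split_ifs with h
    · exfalso
      have hu : m u ≠ 0 := by
        rw [← h]
        simp [Finsupp.add_apply, Finsupp.single_apply, huv.ne']
    -- done below
      have hv : m v ≠ 0 := by
        rw [← h]
        simp [Finsupp.add_apply, Finsupp.single_apply, huv.ne]
      exact hm u (Finsupp.mem_support_iff.2 hu) v (Finsupp.mem_support_iff.2 hv) huv
    · rfl
  · intro m hm; rw [coeff_zero]
  · intro q r _ _ hq hr m hm
    rw [coeff_add, hq m hm, hr m hm, add_zero]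
  · intro a q _ hq m hm
    rw [smul_eq_mul, coeff_mul]
    refine Finset.sum_eq_zero fun pr hpr => ?_
    rw [Finset.HasAntidiagonal.mem_antidiagonal] at hpr
    have hsub : ∀ u ∈ pr.2.support, u ∈ m.support := by
      intro u hu
      rw [Finsupp.mem_support_iff] at hu ⊢
      have : m u = pr.1 u + pr.2 u := by rw [← hpr]; rfl
      omega
    rw [hq pr.2 (fun u hu v hv => hm u (hsub u hu) v (hsub v hv)), mul_zero]

/-- A monomial whose support contains two adjacent vertices lies in the edge ideal. -/
lemma monomial_mem_edgeIdeal {m : V →₀ ℕ} {u v : V} (hadj : G.Adj u v)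
    (hu : m u ≠ 0) (hv : m v ≠ 0) :
    (monomial m 1 : MvPolynomial V k) ∈ G.edgeIdeal k := by
  classical
  have he : (Finsupp.single u 1 + Finsupp.single v 1 : V →₀ ℕ) ≤ m := by
    rw [Finsupp.le_def]
    intro w
    rw [Finsupp.add_apply]
    rcases eq_or_ne u w with rfl | huw
    · rw [Finsupp.single_eq_same, Finsupp.single_eq_of_ne' hadj.ne']
      omega
    · rw [Finsupp.single_eq_of_ne' huw]
      rcases eq_or_ne v w with rfl | hvw
      · rw [Finsupp.single_eq_same]
        omega
      · rw [Finsupp.single_eq_of_ne' hvw]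
        omega
  have heq : (monomial m 1 : MvPolynomial V k) =
      monomial (m - (Finsupp.single u 1 + Finsupp.single v 1)) 1 * (X u * X v) := by
    rw [X, X, monomial_mul, monomial_mul, one_mul, one_mul, tsub_add_cancel_of_le he]
  rw [heq]
  exact Ideal.mul_mem_left _ _ (Ideal.subset_span ⟨u, v, hadj, rfl⟩)

variable [Fintype V]

variable (G) in
open Classical in
/-- Monomials of degree `s` whose support is independent in `G`. -/
noncomputable def goodM (s : ℕ) : Finset (V →₀ ℕ) :=
  (Finset.finsuppAntidiag (univ : Finset V) s).filter
    (fun m => ∀ u ∈ m.support, ∀ v ∈ m.support, ¬ G.Adj u v)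

lemma mem_goodM {s : ℕ} {m : V →₀ ℕ} :
    m ∈ goodM G s ↔ m.degree = s ∧ ∀ u ∈ m.support, ∀ v ∈ m.support, ¬ G.Adj u v := by
  classical
  rw [goodM, mem_filter, Finset.mem_finsuppAntidiag']
  have hdeg : m.degree = m.sum fun _ x => x := rfl
  constructor
  · rintro ⟨⟨h1, -⟩, h2⟩
    exact ⟨by rw [hdeg, h1], h2⟩
  · rintro ⟨h1, h2⟩
    exact ⟨⟨by rw [← hdeg, h1], subset_univ _⟩, h2⟩

open Classical in
lemma finrank_graded_piece (s : ℕ) :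
    Module.finrank k (Submodule.map (Ideal.Quotient.mkₐ k (G.edgeIdeal k)).toLinearMap
      (homogeneousSubmodule V k s)) = (goodM G s).card := by
  classical
  set I := G.edgeIdeal k with hI
  set q := Ideal.Quotient.mkₐ k I with hq
  set Φ : (V →₀ ℕ) → (MvPolynomial V k ⧸ I) := fun m => q (monomial m 1) with hΦ
  have hzero : ∀ m : V →₀ ℕ,
      ¬ (∀ u ∈ m.support, ∀ v ∈ m.support, ¬ G.Adj u v) → Φ m = 0 := by
    intro m hm
    push_neg at hm
    obtain ⟨u, hu, v, hv, hadj⟩ := hm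
    rw [hΦ]
    simp only
    rw [hq, Ideal.Quotient.mkₐ_eq_mk, Ideal.Quotient.eq_zero_iff_mem]
    exact monomial_mem_edgeIdeal (k := k) hadj (Finsupp.mem_support_iff.1 hu)
      (Finsupp.mem_support_iff.1 hv)
  have hspan : Submodule.map q.toLinearMap (homogeneousSubmodule V k s) =
      Submodule.span k (Φ '' ↑(goodM G s)) := by
    rw [homogeneousSubmodule_eq_finsupp_supported, AddMonoidAlgebra.supported_eq_span_single,
      Submodule.map_span, ← Set.image_comp]
    have himg : (⇑q.toLinearMap ∘ fun i => AddMonoidAlgebra.single i (1 : k)) = Φ := by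
      funext m
      rw [hΦ]
      simp only [Function.comp_apply, single_eq_monomial, AlgHom.toLinearMap_apply]
    rw [himg]
    apply le_antisymm
    · rw [Submodule.span_le]
      rintro z ⟨dd, hd, rfl⟩
      by_cases hind : ∀ u ∈ dd.support, ∀ v ∈ dd.support, ¬ G.Adj u v
      · exact Submodule.subset_span
          ⟨dd, by rw [Finset.mem_coe, mem_goodM]; exact ⟨hd, hind⟩, rfl⟩
      · rw [hzero dd hind]
        exact Submodule.zero_mem _
    · apply Submodule.span_mono
      rintro z ⟨dd, hd, rfl⟩
      rw [Finset.mem_coe, mem_goodM] at hd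
      exact ⟨dd, hd.1, rfl⟩
  have hinjOn : Set.InjOn Φ ↑(goodM G s) := by
    intro a ha b hb hab
    by_contra hne
    rw [Finset.mem_coe, mem_goodM] at ha hb
    have hmem : (monomial a 1 - monomial b 1 : MvPolynomial V k) ∈ I := by
      rw [← Ideal.Quotient.eq_zero_iff_mem]
      have h4 : Ideal.Quotient.mk I (monomial a 1 - monomial b 1) =
          q.toLinearMap (monomial a 1 - monomial b 1) := rfl
      rw [h4, map_sub, show q.toLinearMap ((monomial a) 1) = Φ a from rfl,
        show q.toLinearMap ((monomial b) 1) = Φ b from rfl, hab, sub_self]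
    have := coeff_eq_zero_of_mem_edgeIdeal (k := k) hmem a ha.2
    rw [coeff_sub, coeff_monomial, coeff_monomial, if_pos rfl, if_neg (fun h => hne h.symm)] at this
    simp at this
  have hLIfam : LinearIndependent k (fun m : ↥(↑(goodM G s) : Set (V →₀ ℕ)) => Φ ↑m) := by
    rw [linearIndependent_iff']
    intro t g hsum i hit
    set p : MvPolynomial V k := ∑ j ∈ t, g j • monomial (j : V →₀ ℕ) 1 with hp
    have hmemI : p ∈ I := by
      rw [← Ideal.Quotient.eq_zero_iff_mem]
      have h2 : Ideal.Quotient.mk I p = q.toLinearMap p := by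
        rw [hq]; rfl
      have h3 : q.toLinearMap p = ∑ j ∈ t, g j • Φ ↑j := by
        rw [hp, map_sum]
        refine Finset.sum_congr rfl fun j hj => ?_
        rw [map_smul]
        rfl
      rw [h2, h3, hsum]
    have hiS : (↑i : V →₀ ℕ) ∈ goodM G s := by
      have := i.2
      rwa [Finset.mem_coe] at this
    have hcz := coeff_eq_zero_of_mem_edgeIdeal (k := k) hmemI ↑i (mem_goodM.1 hiS).2
    have hci : coeff (↑i : V →₀ ℕ) p = g i := by
      rw [hp, coeff_sum]
      rw [Finset.sum_eq_single i]
      · rw [coeff_smul, coeff_monomial, if_pos rfl, smul_eq_mul, mul_one]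
      · intro j hj hji
        rw [coeff_smul, coeff_monomial, if_neg (fun h => hji (Subtype.ext h)), smul_eq_mul,
          mul_zero]
      · intro h; exact absurd hit h
    rw [hci] at hcz
    exact hcz
  haveI : Fintype ↥(Φ '' ↑(goodM G s)) := (((goodM G s).finite_toSet).image Φ).fintype
  rw [hspan, finrank_span_set_eq_card ((linearIndepOn_iff_image hinjOn).1 hLIfam)]
  rw [Set.toFinset_image]
  simp only [Finset.toFinset_coe]
  exact Finset.card_image_of_injOn hinjOn

end Alg

/-- Number of compositions of `s` into `n` positive parts. -/
def cnt : ℕ → ℕ → ℕ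
  | 0, s => if s = 0 then 1 else 0
  | n + 1, s => ∑ p ∈ Finset.HasAntidiagonal.antidiagonal s, if p.2 = 0 then 0 else cnt n p.1

lemma cnt_zero (s : ℕ) : cnt 0 s = if s = 0 then 1 else 0 := rfl

lemma cnt_succ (n s : ℕ) :
    cnt (n + 1) s = ∑ p ∈ Finset.HasAntidiagonal.antidiagonal s, if p.2 = 0 then 0 else cnt n p.1 := rfl

/-- Monomials of degree `s` with support exactly `W` are counted by compositions. -/
lemma card_filter_support_eq {α : Type*} [DecidableEq α] (W : Finset α) :
    ∀ s : ℕ, ((Finset.finsuppAntidiag W s).filter (fun m => m.support = W)).card =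
      cnt W.card s := by
  classical
  induction W using Finset.induction_on with
  | empty =>
    intro s
    rw [Finset.finsuppAntidiag_empty]
    rcases eq_or_ne s 0 with rfl | hs
    · rw [if_pos rfl, Finset.filter_singleton, if_pos Finsupp.support_zero]
      simp [cnt_zero]
    · rw [if_neg hs]
      simp [cnt_zero, hs]
  | @insert a W ha IH =>
    intro s
    have hmaps : ∀ m ∈ (Finset.finsuppAntidiag (insert a W) s).filter
        (fun m => m.support = insert a W),
        (s - m a, m a) ∈ Finset.HasAntidiagonal.antidiagonal s := by
      intro m hm
      rw [mem_filter, Finset.mem_finsuppAntidiag] at hm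
      obtain ⟨⟨hsum, hsub⟩, hsupp⟩ := hm
      have hle : m a ≤ s := by
        rw [← hsum]
        exact Finset.single_le_sum (fun i _ => Nat.zero_le _) (mem_insert_self a W)
      rw [Finset.HasAntidiagonal.mem_antidiagonal]
      omega
    rw [Finset.card_eq_sum_card_fiberwise hmaps, Finset.card_insert_of_notMem ha, cnt_succ]
    refine Finset.sum_congr rfl fun p hp => ?_
    rw [Finset.HasAntidiagonal.mem_antidiagonal] at hp
    by_cases hp2 : p.2 = 0
    · rw [if_pos hp2, Finset.card_eq_zero, Finset.eq_empty_iff_forall_notMem]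
      intro m hm
      rw [mem_filter, mem_filter] at hm
      obtain ⟨⟨hm1, hm2⟩, hm3⟩ := hm
      have hma : m a ≠ 0 := Finsupp.mem_support_iff.1 (by rw [hm2]; exact mem_insert_self a W)
      have h4 : m a = p.2 := congrArg Prod.snd hm3
      omega
    · rw [if_neg hp2, ← IH p.1]
      refine Finset.card_nbij' (i := fun m => m.erase a)
        (j := fun m' => m' + Finsupp.single a p.2) ?_ ?_ ?_ ?_
      · intro m hm
        rw [Finset.mem_coe, mem_filter, mem_filter, Finset.mem_finsuppAntidiag] at hm
        obtain ⟨⟨⟨hsum, hsub⟩, hsupp⟩, hfib⟩ := hm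
        have hma : m a = p.2 := congrArg Prod.snd hfib
        have hsum' : ∑ w ∈ W, m w = p.1 := by
          rw [Finset.sum_insert ha] at hsum
          omega
        rw [Finset.mem_coe, mem_filter, Finset.mem_finsuppAntidiag]
        have hsupp' : (m.erase a).support = W := by
          rw [Finsupp.support_erase, hsupp, Finset.erase_insert_eq_erase,
            Finset.erase_eq_of_notMem ha]
        refine ⟨⟨?_, by rw [hsupp']⟩, hsupp'⟩
        rw [← hsum']
        refine Finset.sum_congr rfl fun w hw => ?_
        exact Finsupp.erase_ne (fun h => ha (h ▸ hw))
      · intro m' hm'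
        rw [Finset.mem_coe, mem_filter, Finset.mem_finsuppAntidiag] at hm'
        obtain ⟨⟨hsum, hsub⟩, hsupp⟩ := hm'
        have hanotin : a ∉ m'.support := by rw [hsupp]; exact ha
        have hm'a : m' a = 0 := Finsupp.notMem_support_iff.1 hanotin
        have hval : (m' + Finsupp.single a p.2) a = p.2 := by
          rw [Finsupp.add_apply, hm'a, Finsupp.single_eq_same, zero_add]
        have hsupp2 : (m' + Finsupp.single a p.2).support = insert a W := by
          rw [Finsupp.support_add_eq, hsupp, Finsupp.support_single_ne_zero a hp2,
            Finset.union_comm, ← Finset.insert_eq]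
          rw [hsupp, Finsupp.support_single_ne_zero a hp2]
          exact Finset.disjoint_singleton_right.2 ha
        rw [Finset.mem_coe, mem_filter, mem_filter, Finset.mem_finsuppAntidiag]
        refine ⟨⟨⟨?_, by rw [hsupp2]⟩, hsupp2⟩, ?_⟩
        · rw [Finset.sum_insert ha, hval]
          have h5 : ∑ w ∈ W, (m' + Finsupp.single a p.2) w = p.1 := by
            rw [← hsum]
            refine Finset.sum_congr rfl fun w hw => ?_
            rw [Finsupp.add_apply, Finsupp.single_apply,
              if_neg (fun h : a = w => ha (h ▸ hw)), add_zero]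
          rw [h5]
          omega
        · rw [hval]
          have : s - p.2 = p.1 := by omega
          rw [this]
      · intro m hm
        rw [Finset.mem_coe, mem_filter, mem_filter] at hm
        have hma : m a = p.2 := congrArg Prod.snd hm.2
        rw [← hma]
        exact Finsupp.erase_add_single a m
      · intro m' hm'
        rw [Finset.mem_coe, mem_filter, Finset.mem_finsuppAntidiag] at hm'
        obtain ⟨⟨hsum, hsub⟩, hsupp⟩ := hm'
        have hm'a : m' a = 0 := Finsupp.notMem_support_iff.1 (by rw [hsupp]; exact ha)
        ext w
        rcases eq_or_ne w a with rfl | hwa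
        · rw [Finsupp.erase_same, hm'a]
        · rw [Finsupp.erase_ne hwa, Finsupp.add_apply, Finsupp.single_apply,
            if_neg (fun h : a = w => hwa h.symm), add_zero]

section Alg2

variable (k : Type*) [Field k] [Fintype V]

variable (G) in
open Classical in
/-- Independent subsets of the vertices. -/
noncomputable def indepFinsets : Finset (Finset V) :=
  univ.filter (fun W => ∀ u ∈ W, ∀ v ∈ W, ¬ G.Adj u v)

lemma card_goodM (s : ℕ) : (goodM G s).card = ∑ W ∈ indepFinsets G, cnt W.card s := by
  classical
  have H : ∀ m ∈ goodM G s, m.support ∈ indepFinsets G := by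
    intro m hm
    rw [mem_goodM] at hm
    rw [indepFinsets, mem_filter]
    exact ⟨mem_univ _, hm.2⟩
  rw [Finset.card_eq_sum_card_fiberwise H]
  refine Finset.sum_congr rfl fun W hW => ?_
  rw [indepFinsets, mem_filter] at hW
  rw [← card_filter_support_eq W s]
  congr 1
  ext m
  rw [mem_filter, mem_filter, mem_goodM, Finset.mem_finsuppAntidiag]
  have hdegsum : ∀ h : m.support = W, W.sum ⇑m = m.degree := by
    intro h
    rw [← h]
    rfl
  constructor
  · rintro ⟨⟨hdeg, hind⟩, hsupp⟩
    exact ⟨⟨by rw [hdegsum hsupp, hdeg], by rw [hsupp]⟩, hsupp⟩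
  · rintro ⟨⟨hsum, hsub⟩, hsupp⟩
    refine ⟨⟨by rw [← hdegsum hsupp, hsum], ?_⟩, hsupp⟩
    intro u hu v hv
    rw [hsupp] at hu hv
    exact hW.2 u hu v hv

end Alg2

/-- The power series `t/(1-t)` over `ℤ`. -/
noncomputable def Tser : PowerSeries ℤ := PowerSeries.mk fun n => if n = 0 then 0 else 1

lemma coeff_T_pow : ∀ n s : ℕ, (PowerSeries.coeff s) (Tser ^ n) = cnt n s := by
  intro n
  induction n with
  | zero =>
    intro s
    rw [pow_zero, PowerSeries.coeff_one, cnt_zero]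
    split_ifs <;> simp
  | succ n IH =>
    intro s
    rw [pow_succ, PowerSeries.coeff_mul, cnt_succ, Nat.cast_sum]
    refine Finset.sum_congr rfl fun p hp => ?_
    rw [IH p.1, Tser, PowerSeries.coeff_mk]
    split_ifs with h <;> simp

lemma one_sub_X_mul_T : (1 - PowerSeries.X) * Tser = (PowerSeries.X : PowerSeries ℤ) := by
  ext n
  rw [sub_mul, one_mul, map_sub]
  cases n with
  | zero =>
    rw [PowerSeries.coeff_zero_X_mul, Tser, PowerSeries.coeff_mk]
    simp [PowerSeries.coeff_X]
  | succ n =>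
    rw [PowerSeries.coeff_succ_X_mul, Tser, PowerSeries.coeff_mk, PowerSeries.coeff_mk,
      PowerSeries.coeff_X]
    rcases eq_or_ne n 0 with rfl | h
    · simp
    · rw [if_neg h, if_neg (by omega : ¬ n + 1 = 0), if_neg (by omega : ¬ n + 1 = 1), sub_self]

section Final

variable [Fintype V]

variable (x y) in
open Classical in
/-- The independent set associated to a partial selection. -/
noncomputable def toW (f : Fin d → Option Bool) : Finset V :=
  (univ.filter fun i => (f i).isSome).image (fun i => sel x y i ((f i).getD false))

variable (x y) in
/-- The partial selection associated to a set of vertices. -/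
noncomputable def fromW (W : Finset V) : Fin d → Option Bool := open Classical in
  fun i => if y i ∈ W then some true else if x i ∈ W then some false else none

lemma mem_toW {f : Fin d → Option Bool} {v : V} :
    v ∈ toW x y f ↔ ∃ i b, f i = some b ∧ sel x y i b = v := by
  classical
  rw [toW, mem_image]
  constructor
  · rintro ⟨i, hi, rfl⟩
    rw [mem_filter] at hi
    obtain ⟨b, hb⟩ := Option.isSome_iff_exists.1 hi.2
    exact ⟨i, b, hb, by simp [hb]⟩
  · rintro ⟨i, b, hb, rfl⟩
    exact ⟨i, by rw [mem_filter]; exact ⟨mem_univ _, by rw [hb]; rfl⟩, by simp [hb]⟩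

section HypsF

variable (hinj : Function.Injective (fun i : Fin d ⊕ Fin d => Sum.elim x y i))
variable (hsurj : Function.Surjective (fun i : Fin d ⊕ Fin d => Sum.elim x y i))
variable (hedge : ∀ i : Fin d, G.Adj (x i) (y i))

include hinj in
lemma fromW_toW {f : Fin d → Option Bool} : fromW x y (toW x y f) = f := by
  classical
  funext i
  have hxmem : x i ∈ toW x y f ↔ f i = some false := by
    rw [mem_toW]
    constructor
    · rintro ⟨j, b, hb, hs⟩
      obtain ⟨rfl, rfl⟩ := sel_inj hinj (hs.trans (sel_false x y).symm)
      exact hb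
    · intro h
      exact ⟨i, false, h, rfl⟩
  have hymem : y i ∈ toW x y f ↔ f i = some true := by
    rw [mem_toW]
    constructor
    · rintro ⟨j, b, hb, hs⟩
      obtain ⟨rfl, rfl⟩ := sel_inj hinj (hs.trans (sel_true x y).symm)
      exact hb
    · intro h
      exact ⟨i, true, h, rfl⟩
  rw [fromW]
  cases hfi : f i with
  | none =>
    rw [if_neg (fun h => by rw [hymem.1 h] at hfi; exact absurd hfi (by simp)),
      if_neg (fun h => by rw [hxmem.1 h] at hfi; exact absurd hfi (by simp))]
  | some b =>
    cases b with
    | true => rw [if_pos (hymem.2 hfi)]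
    | false =>
      rw [if_neg (fun h => by rw [hymem.1 h] at hfi; exact absurd hfi (by simp)),
        if_pos (hxmem.2 hfi)]

include hsurj hedge in
lemma toW_fromW {W : Finset V} (hW : ∀ u ∈ W, ∀ v ∈ W, ¬ G.Adj u v) :
    toW x y (fromW x y W) = W := by
  classical
  ext v
  rw [mem_toW]
  constructor
  · rintro ⟨i, b, hb, rfl⟩
    rw [fromW] at hb
    by_cases hy : y i ∈ W
    · rw [if_pos hy] at hb
      obtain rfl : true = b := Option.some_injective _ hb
      exact hy
    · rw [if_neg hy] at hb
      by_cases hx : x i ∈ W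
      · rw [if_pos hx] at hb
        obtain rfl : false = b := Option.some_injective _ hb
        exact hx
      · rw [if_neg hx] at hb
        exact absurd hb (by simp)
  · intro hv
    obtain ⟨iv, hiv⟩ := hsurj v
    cases iv with
    | inr i =>
      have hvy : v = y i := hiv.symm
      subst hvy
      exact ⟨i, true, by rw [fromW, if_pos hv], rfl⟩
    | inl i =>
      have hvx : v = x i := hiv.symm
      subst hvx
      have hy : y i ∉ W := fun hy => hW _ hv _ hy (hedge i)
      exact ⟨i, false, by rw [fromW, if_neg hy, if_pos hv], rfl⟩

lemma indepO_fromW {W : Finset V} (hW : ∀ u ∈ W, ∀ v ∈ W, ¬ G.Adj u v) :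
    IndepO G x y (fromW x y W) := by
  classical
  have hmem : ∀ (i : Fin d) (a : Bool), fromW x y W i = some a → sel x y i a ∈ W := by
    intro i a h
    rw [fromW] at h
    by_cases hy : y i ∈ W
    · rw [if_pos hy] at h
      obtain rfl : true = a := Option.some_injective _ h
      exact hy
    · rw [if_neg hy] at h
      by_cases hx : x i ∈ W
      · rw [if_pos hx] at h
        obtain rfl : false = a := Option.some_injective _ h
        exact hx
      · rw [if_neg hx] at h
        exact absurd h (by simp)
  intro i j hij a b ha hb
  exact hW _ (hmem i a ha) _ (hmem j b hb)

include hinj in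
lemma indep_toW {f : Fin d → Option Bool} (hf : IndepO G x y f) :
    ∀ u ∈ toW x y f, ∀ v ∈ toW x y f, ¬ G.Adj u v := by
  intro u hu v hv hadj
  rw [mem_toW] at hu hv
  obtain ⟨i, a, ha, rfl⟩ := hu
  obtain ⟨j, b, hb, rfl⟩ := hv
  rcases eq_or_ne i j with rfl | hij
  · rw [ha] at hb
    obtain rfl : a = b := Option.some_injective _ hb
    exact G.loopless.irrefl _ hadj
  · exact hf i j hij a b ha hb hadj

include hinj in
lemma card_toW (f : Fin d → Option Bool) :
    (toW x y f).card = (univ.filter fun i => (f i).isSome).card := by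
  classical
  rw [toW]
  refine Finset.card_image_of_injOn ?_
  intro i hi j hj hs
  exact (sel_inj hinj hs).1

open Classical in
include hinj hsurj hedge in
lemma sum_transfer {A : Type*} [CommRing A] (F : ℕ → A) :
    ∑ W ∈ indepFinsets G, F W.card =
      ∑ f ∈ univ.filter (IndepO G x y), F ((univ.filter fun i => (f i).isSome).card) := by
  classical
  refine Finset.sum_nbij' (i := fromW x y) (j := toW x y) ?_ ?_ ?_ ?_ ?_
  · intro W hW
    rw [indepFinsets, mem_filter] at hW
    rw [mem_filter]
    exact ⟨mem_univ _, indepO_fromW hW.2⟩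
  · intro f hf
    rw [mem_filter] at hf
    rw [indepFinsets, mem_filter]
    exact ⟨mem_univ _, indep_toW hinj hf.2⟩
  · intro W hW
    rw [indepFinsets, mem_filter] at hW
    exact toW_fromW hsurj hedge hW.2
  · intro f hf
    exact fromW_toW hinj
  · intro W hW
    rw [indepFinsets, mem_filter] at hW
    rw [← card_toW hinj (fromW x y W), toW_fromW hsurj hedge hW.2]

include hinj hsurj hedge in
lemma card_le_d {W : Finset V} (hmem : W ∈ indepFinsets G) : W.card ≤ d := by
  classical
  rw [indepFinsets, mem_filter] at hmem
  have h1 := card_toW hinj (fromW x y W)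
  rw [toW_fromW hsurj hedge hmem.2] at h1
  rw [h1]
  calc (univ.filter fun i => ((fromW x y W i).isSome : Prop)).card
      ≤ (univ : Finset (Fin d)).card := card_le_card (filter_subset _ _)
    _ = d := by rw [card_univ, Fintype.card_fin]

end HypsF

end Final

end HVec


open HVec in
/-- for a graph with a perfect matching `M = {{x_i,y_i}}` of Property-P
edges satisfying the separability condition, the entry `h_j` of the `h`-vector of
`R/I(G)` (i.e. the `j`-th coefficient of `HS_{R/I(G)}(t)·(1-t)^d`, `d = dim R/I(G) = |M|`)
equals the number of `j`-element subsets of `M` forming an induced matching of `G`. -/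
theorem h_vector_counts_induced_matchings
    {k : Type*} [Field k] {V : Type*} [Fintype V]
    (G : SimpleGraph V) (d : ℕ) (x y : Fin d → V)
    (hperf : Function.Bijective (fun i : Fin d ⊕ Fin d => Sum.elim x y i))
    (hedge : ∀ i : Fin d, G.Adj (x i) (y i))
    (hP : ∀ i : Fin d, G.HasPropertyP (x i) (y i))
    (hsep : ∀ i j : Fin d, j < i →
      ¬ G.Adj (x i) (x j) ∧ ¬ G.Adj (x i) (y j)) :
    quotHilbertSeries k V (G.edgeIdeal k) * (1 - PowerSeries.X) ^ d =
      PowerSeries.mk fun j =>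
        ((Set.ncard {S : Finset (Fin d) | S.card = j ∧
          ∀ i ∈ S, ∀ i' ∈ S, i ≠ i' →
            ¬ G.Adj (x i) (x i') ∧ ¬ G.Adj (x i) (y i') ∧
              ¬ G.Adj (y i) (y i')}) : ℤ) := by
  classical
  obtain ⟨hinj, hsurj⟩ := hperf
  have hHS : quotHilbertSeries k V (G.edgeIdeal k) =
      ∑ W ∈ indepFinsets G, Tser ^ W.card := by
    refine PowerSeries.ext fun s => ?_
    rw [quotHilbertSeries, PowerSeries.coeff_mk, finrank_graded_piece k s, card_goodM,
      map_sum, Nat.cast_sum]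
    exact Finset.sum_congr rfl fun W _ => (coeff_T_pow W.card s).symm
  rw [hHS, Finset.sum_mul]
  have hstep : ∀ W ∈ indepFinsets G, Tser ^ W.card * (1 - PowerSeries.X) ^ d
      = PowerSeries.X ^ W.card * (1 - PowerSeries.X) ^ (d - W.card) := by
    intro W hW
    have hle : W.card ≤ d := card_le_d hinj hsurj hedge hW
    have h6 : (1 - PowerSeries.X : PowerSeries ℤ) ^ d =
        (1 - PowerSeries.X) ^ W.card * (1 - PowerSeries.X) ^ (d - W.card) := by
      rw [← pow_add]
      congr 1
      omega
    rw [h6, ← mul_assoc, ← mul_pow, mul_comm Tser (1 - PowerSeries.X), one_sub_X_mul_T]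
  rw [Finset.sum_congr rfl hstep]
  rw [sum_transfer hinj hsurj hedge
    (fun c => PowerSeries.X ^ c * (1 - PowerSeries.X) ^ (d - c))]
  rw [sum_claim3 hinj hP hsep (PowerSeries ℤ) PowerSeries.X]
  refine PowerSeries.ext fun j => ?_
  rw [map_sum, PowerSeries.coeff_mk]
  have h9 : ∀ S ∈ univ.filter (IsIM G x y),
      (PowerSeries.coeff j) (PowerSeries.X ^ S.card) = if S.card = j then (1:ℤ) else 0 := by
    intro S _
    rw [PowerSeries.coeff_X_pow]
    exact if_congr eq_comm rfl rfl
  rw [Finset.sum_congr rfl h9, Finset.sum_boole]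
  congr 1
  have h10 : {S : Finset (Fin d) | S.card = j ∧
      ∀ i ∈ S, ∀ i' ∈ S, i ≠ i' →
        ¬ G.Adj (x i) (x i') ∧ ¬ G.Adj (x i) (y i') ∧ ¬ G.Adj (y i) (y i')} =
      ↑((univ.filter (IsIM G x y)).filter (fun S => S.card = j)) := by
    ext S
    simp only [Set.mem_setOf_eq, Finset.coe_filter, Finset.mem_filter, Finset.mem_univ, true_and]
    exact ⟨fun ⟨h1, h2⟩ => ⟨h2, h1⟩, fun ⟨h1, h2⟩ => ⟨h2, h1⟩⟩
  rw [h10, Set.ncard_coe_finset]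
end

section
/- Let G be a graph with exactly one loop, at vertex x, and let y be a fresh vertex; let G^pol be the graph obtained by replacing the loop x² with the edge {x,y} (polarization of the loop). Then for an edge {u,w} of G with u, w both distinct from x, the edge {u,w} has Property P in G if and only if it has Property P in G^pol. -/
/-- The polarization of the loop at `x`: replace the loop `x²` by an edge `{x, y}` to a
fresh vertex `y` (here `none`), keeping all non-loop edges. -/
def LoopGraph.polarizeLoop {V : Type*} (G : LoopGraph V) (x : V) :
    LoopGraph (Option V) where
  Adj a b := (∃ u v : V, a = some u ∧ b = some v ∧ u ≠ v ∧ G.Adj u v) ∨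
    (a = some x ∧ b = none) ∨ (a = none ∧ b = some x)
  symm := by
    rintro a b (⟨u, v, rfl, rfl, huv, h⟩ | ⟨rfl, rfl⟩ | ⟨rfl, rfl⟩)
    · exact Or.inl ⟨v, u, rfl, rfl, huv.symm, G.symm _ _ h⟩
    · exact Or.inr (Or.inr ⟨rfl, rfl⟩)
    · exact Or.inr (Or.inl ⟨rfl, rfl⟩)

/-- if `G` has exactly one loop, at `x`, and `{u,w}` is an edge of `G`
with `u, w ≠ x`, then `{u,w}` has Property P in `G` iff it has Property P in the
polarization `G^pol`. -/
theorem propertyP_iff_polarization {V : Type*} [Fintype V]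
    (G : LoopGraph V) (x : V) (hloop : G.Adj x x)
    (honly : ∀ v : V, G.Adj v v → v = x)
    (u w : V) (huw : G.Adj u w) (hne : u ≠ w) (hux : u ≠ x) (hwx : w ≠ x) :
    G.HasPropertyP u w ↔ (G.polarizeLoop x).HasPropertyP (some u) (some w) := by
  constructor
  · rintro ⟨hu, hw, hP⟩
    refine ⟨?_, ?_, ?_⟩
    · rintro (⟨p, q, hp, hq, hpq, _⟩ | ⟨h1, h2⟩ | ⟨h1, h2⟩) <;> simp_all
    · rintro (⟨p, q, hp, hq, hpq, _⟩ | ⟨h1, h2⟩ | ⟨h1, h2⟩) <;> simp_all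
    · rintro a b (⟨p, q, rfl, hq, hpq, hadj⟩ | ⟨rfl, h2⟩ | ⟨rfl, h2⟩) hav
        (⟨p', q', hp', rfl, hpq', hadj'⟩ | ⟨h1', rfl⟩ | ⟨h1', rfl⟩) hbu
      · cases hq; cases hp'
        obtain ⟨hne', hadj''⟩ := hP p q' hadj (by simpa using hav) hadj' (by simpa using hbu)
        exact ⟨by simpa using hne', Or.inl ⟨p, q', rfl, rfl, hne', hadj''⟩⟩
      all_goals simp_all
  · rintro ⟨hu, hw, hP⟩
    refine ⟨?_, ?_, ?_⟩
    · intro h; exact hux (honly u h)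
    · intro h; exact hwx (honly w h)
    · intro a b hau haw hwb hbu
      have hau' : a ≠ u := fun h => hux (honly u (h ▸ hau))
      have hbw' : b ≠ w := fun h => hwx (honly w (h ▸ hwb))
      obtain ⟨hne', hadj⟩ := hP (some a) (some b)
        (Or.inl ⟨a, u, rfl, rfl, hau', hau⟩) (by simpa using haw)
        (Or.inl ⟨w, b, rfl, rfl, fun h => hbw' h.symm, hwb⟩) (by simpa using hbu)
      refine ⟨by simpa using hne', ?_⟩
      rcases hadj with ⟨p, q, hp, hq, hpq, h⟩ | ⟨_, h⟩ | ⟨h, _⟩ <;> simp_all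
end
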